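/- arXiv:1603.01740 — 7 statements merged into one kernel-verified Lean document; each statement's English description precedes it below -/
import Mathlib

section
/- Let F be a forest and let S be a non-empty irreducible routing of F with congestion c. Then the average length of the paths in S is at most 2c; equivalently, the sum of the lengths of the paths in S is at most 2c·|S|. -/
open Finset SimpleGraph

attribute [local instance] Classical.propDecidable
set_option linter.unusedSectionVars false
set_option maxHeartbeats 1000000

namespace IrrRoutingAux

variable {V : Type*} [Fintype V] [DecidableEq V] {ι : Type*} [Fintype ι]
variable (F : SimpleGraph V)

noncomputable def used (Q : ι → Σ u v : V, F.Walk u v) : Finset (Sym2 V) :=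
  univ.filter (fun e => ∃ i, e ∈ (Q i).2.2.edges)

noncomputable def load (Q : ι → Σ u v : V, F.Walk u v) (e : Sym2 V) : ℕ :=
  (univ.filter (fun i => e ∈ (Q i).2.2.edges)).card

noncomputable def side (Q : ι → Σ u v : V, F.Walk u v) (u v : V) : Finset V :=
  univ.filter (fun w => ∃ p : F.Walk w v, s(u,v) ∉ p.edges ∧ ∀ g ∈ p.edges, g ∈ used F Q)

noncomputable def inE (Q : ι → Σ u v : V, F.Walk u v) (u v : V) : Finset (Sym2 V) :=
  (used F Q).filter (fun g => g ≠ s(u,v) ∧ ∃ w ∈ g, w ∈ side F Q u v)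

noncomputable def ends (Q : ι → Σ u v : V, F.Walk u v) (X : Finset V) : ℕ :=
  ∑ i, if 0 < (Q i).2.2.length then
    ((if (Q i).1 ∈ X then 1 else 0) + (if (Q i).2.1 ∈ X then 1 else 0)) else 0

variable {F}
variable {Q : ι → Σ u v : V, F.Walk u v}

lemma mem_used {e : Sym2 V} : e ∈ used F Q ↔ ∃ i, e ∈ (Q i).2.2.edges := by
  simp [used]

lemma mem_side {u v w : V} :
    w ∈ side F Q u v ↔ ∃ p : F.Walk w v, s(u,v) ∉ p.edges ∧ ∀ g ∈ p.edges, g ∈ used F Q := by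
  simp [side]

lemma used_subset_edgeSet {e : Sym2 V} (he : e ∈ used F Q) : e ∈ F.edgeSet := by
  obtain ⟨i, hi⟩ := mem_used.mp he
  exact (Q i).2.2.edges_subset_edgeSet hi

lemma bridge (hF : F.IsAcyclic) {u v : V} (h : F.Adj u v) (p : F.Walk u v) :
    s(u,v) ∈ p.edges :=
  ((isBridge_iff_adj_and_forall_walk_mem_edges.mp
    (isAcyclic_iff_forall_edge_isBridge.mp hF ((F.mem_edgeSet).mpr h))) p)

lemma v_mem_side {u v : V} : v ∈ side F Q u v :=
  mem_side.mpr ⟨Walk.nil, by simp⟩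

lemma side_disjoint (hF : F.IsAcyclic) {u v : V} (huv : F.Adj u v) {w : V}
    (h1 : w ∈ side F Q u v) (h2 : w ∈ side F Q v u) : False := by
  obtain ⟨p, hpe, -⟩ := mem_side.mp h1
  obtain ⟨q, hqe, -⟩ := mem_side.mp h2
  have := bridge hF huv (q.reverse.append p)
  rw [Walk.edges_append, List.mem_append, Walk.edges_reverse, List.mem_reverse] at this
  rcases this with h | h
  · exact hqe (by rwa [Sym2.eq_swap] at h)
  · exact hpe h

lemma u_not_mem_side (hF : F.IsAcyclic) {u v : V} (huv : F.Adj u v) :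
    u ∉ side F Q u v := fun h => by
  obtain ⟨p, hpe, -⟩ := mem_side.mp h
  exact hpe (bridge hF huv p)


lemma v_not_mem_child_side (hF : F.IsAcyclic) {v c : V} (hvc : F.Adj v c) :
    v ∉ side F Q v c := fun h => by
  obtain ⟨p, hpe, -⟩ := mem_side.mp h
  exact hpe (bridge hF hvc p)

lemma child_side_subset (hF : F.IsAcyclic) {u v c : V} (huv : F.Adj u v) (hvc : F.Adj v c)
    (hcu : c ≠ u) (hused : s(v,c) ∈ used F Q) :
    side F Q v c ⊆ side F Q u v := by
  intro w hw
  obtain ⟨p, hpf, hpu⟩ := mem_side.mp hw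
  -- p : w → c avoids s(v,c); show it avoids s(u,v)
  have hpe : s(u,v) ∉ p.edges := by
    intro he
    have hv : v ∈ p.support := p.snd_mem_support_of_mem_edges he
    have hd := p.edges_dropUntil_subset hv
    have : s(v,c) ∈ (p.dropUntil v hv).edges := bridge hF hvc (p.dropUntil v hv)
    exact hpf (hd this)
  refine mem_side.mpr ⟨p.concat hvc.symm, ?_, ?_⟩
  · rw [Walk.edges_concat, List.concat_eq_append, List.mem_append]
    rintro (h | h)
    · exact hpe h
    · simp only [List.mem_singleton] at h
      rw [Sym2.eq_iff] at h
      rcases h with ⟨h1, h2⟩ | ⟨h1, h2⟩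
      · exact hcu h1.symm
      · exact huv.ne h1
  · intro g hg
    rw [Walk.edges_concat, List.concat_eq_append, List.mem_append] at hg
    rcases hg with h | h
    · exact hpu g h
    · simp only [List.mem_singleton] at h
      rw [h, Sym2.eq_swap]; exact hused

lemma child_sides_disjoint (hF : F.IsAcyclic) {v c₁ c₂ : V} (h1 : F.Adj v c₁)
    (h2 : F.Adj v c₂) (hne : c₁ ≠ c₂) {w : V}
    (hw1 : w ∈ side F Q v c₁) (hw2 : w ∈ side F Q v c₂) : False := by
  obtain ⟨p₁, hp1, -⟩ := mem_side.mp hw1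
  obtain ⟨p₂, hp2, -⟩ := mem_side.mp hw2
  -- p₁ avoids s(v,c₂)
  have hp12 : s(v,c₂) ∉ p₁.edges := by
    intro he
    have hv : v ∈ p₁.support := p₁.fst_mem_support_of_mem_edges he
    have hd := p₁.edges_dropUntil_subset hv
    exact hp1 (hd (bridge hF h1 (p₁.dropUntil v hv)))
  -- walk v → c₂ : cons (v,c₁) (p₁.reverse.append p₂)
  have hb := bridge hF h2 (Walk.cons h1 (p₁.reverse.append p₂))
  rw [Walk.edges_cons, List.mem_cons, Walk.edges_append, List.mem_append,
    Walk.edges_reverse, List.mem_reverse] at hb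
  rcases hb with h | h | h
  · rw [Sym2.eq_iff] at h
    rcases h with ⟨h1', h2'⟩ | ⟨h1', h2'⟩
    · exact hne h2'.symm
    · exact h1.ne h1'
  · exact hp12 h
  · exact hp2 h

lemma reach_side (hF : F.IsAcyclic) {u v : V} (huv : F.Adj u v) {x : V} (W : F.Walk x v)
    (hW : ∀ g ∈ W.edges, g ∈ used F Q) :
    x ∈ side F Q u v ∨ x ∈ side F Q v u := by
  set q := W.bypass with hq
  have hqp : q.IsPath := W.bypass_isPath
  have hqe : ∀ g ∈ q.edges, g ∈ used F Q := fun g hg => hW g (W.edges_bypass_subset hg)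
  by_cases he : s(u,v) ∈ q.edges
  · right
    have hu : u ∈ q.support := q.fst_mem_support_of_mem_edges he
    refine mem_side.mpr ⟨q.takeUntil u hu, ?_, fun g hg => hqe g (q.edges_takeUntil_subset hu hg)⟩
    intro hvu
    have hv : v ∈ (q.takeUntil u hu).support :=
      (q.takeUntil u hu).fst_mem_support_of_mem_edges hvu
    have hv2 : v ∈ (q.dropUntil u hu).support.tail := by
      have : v ∈ (q.dropUntil u hu).support := Walk.end_mem_support _
      rw [Walk.support_eq_cons, List.mem_cons] at this
      rcases this with h | h
      · exact absurd h huv.ne'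
      · exact h
    have hnd : q.support.Nodup := hqp.support_nodup
    rw [← q.take_spec hu, Walk.support_append, List.nodup_append] at hnd
    exact hnd.2.2 v hv v hv2 rfl
  · exact Or.inl (mem_side.mpr ⟨q, he, hqe⟩)


lemma side_bound (hF : F.IsAcyclic)
    (hpath : ∀ i, (Q i).2.2.IsPath)
    (hirr : ∀ e ∈ used F Q, ∀ e' ∈ used F Q, e ≠ e' →
       ∃ i, e ∈ (Q i).2.2.edges ∧ e' ∉ (Q i).2.2.edges) :
    ∀ (M : ℕ) (u v : V), F.Adj u v → s(u,v) ∈ used F Q → (side F Q u v).card ≤ M →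
      (inE F Q u v).card + load F Q s(u,v) ≤ ends F Q (side F Q u v) := by
  intro M
  induction M with
  | zero =>
    intro u v huv hus hcard
    have h1 : (side F Q u v).Nonempty := ⟨v, v_mem_side⟩
    have := Finset.card_pos.mpr h1
    omega
  | succ M ih =>
    intro u v huv hus hcard
    set ch : Finset V := univ.filter (fun c => F.Adj v c ∧ c ≠ u ∧ s(v,c) ∈ used F Q) with hch
    have hchmem : ∀ c, c ∈ ch ↔ (F.Adj v c ∧ c ≠ u ∧ s(v,c) ∈ used F Q) := by
      intro c; simp [hch]
    have hfne : ∀ c ∈ ch, s(v,c) ≠ s(u,v) := by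
      intro c hc h
      rw [Sym2.eq_iff] at h
      rcases h with ⟨h1, h2⟩ | ⟨h1, h2⟩
      · exact huv.ne h1.symm
      · exact ((hchmem c).mp hc).2.1 h2
    -- IH applied to children
    have key4 : ∀ c ∈ ch, (inE F Q v c).card + load F Q s(v,c) ≤ ends F Q (side F Q v c) := by
      intro c hc
      obtain ⟨hvc, hcu, hu⟩ := (hchmem c).mp hc
      apply ih v c hvc hu
      have hsub : side F Q v c ⊆ (side F Q u v).erase v := by
        intro w hw
        refine Finset.mem_erase.mpr ⟨?_, child_side_subset hF huv hvc hcu hu hw⟩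
        rintro rfl; exact v_not_mem_child_side hF hvc hw
      have h2 : ((side F Q u v).erase v).card = (side F Q u v).card - 1 :=
        Finset.card_erase_of_mem v_mem_side
      have h3 := Finset.card_le_card hsub
      omega
    -- pointwise indicator inequality
    have hpoint : ∀ x : V,
        ((if x ∈ ({v} : Finset V) then (1:ℕ) else 0)
          + ∑ c ∈ ch, (if x ∈ side F Q v c then (1:ℕ) else 0))
          ≤ (if x ∈ side F Q u v then (1:ℕ) else 0) := by
      intro x
      by_cases hx : x = v
      · have h0 : ∀ c ∈ ch, (if x ∈ side F Q v c then (1:ℕ) else 0) = 0 := by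
          intro c hc
          simp only [ite_eq_right_iff]
          intro hmem
          rw [hx] at hmem
          exact absurd hmem (v_not_mem_child_side hF ((hchmem c).mp hc).1)
        rw [Finset.sum_eq_zero h0, if_pos (by simp [hx]),
          if_pos (show x ∈ side F Q u v by rw [hx]; exact v_mem_side)]
        norm_num
      · rw [if_neg (by simpa using hx), zero_add]
        have hcf : ∑ c ∈ ch, (if x ∈ side F Q v c then (1:ℕ) else 0)
            = (ch.filter (fun c => x ∈ side F Q v c)).card := (Finset.card_filter _ _).symm
        rw [hcf]
        rcases (ch.filter (fun c => x ∈ side F Q v c)).eq_empty_or_nonempty with hemp | ⟨c₀, hc₀⟩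
        · simp [hemp]
        · rw [Finset.mem_filter] at hc₀
          have hx_uv : x ∈ side F Q u v :=
            child_side_subset hF huv ((hchmem _).mp hc₀.1).1 ((hchmem _).mp hc₀.1).2.1
              ((hchmem _).mp hc₀.1).2.2 hc₀.2
          rw [if_pos hx_uv]
          refine Finset.card_le_one.mpr ?_
          intro a ha b hb
          rw [Finset.mem_filter] at ha hb
          by_contra hab
          exact child_sides_disjoint hF ((hchmem a).mp ha.1).1 ((hchmem b).mp hb.1).1 hab ha.2 hb.2
    -- ends superadditivity
    have key5 : ends F Q {v} + ∑ c ∈ ch, ends F Q (side F Q v c) ≤ ends F Q (side F Q u v) := by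
      unfold ends
      rw [Finset.sum_comm, ← Finset.sum_add_distrib]
      apply Finset.sum_le_sum
      intro i _
      by_cases hnil : 0 < (Q i).2.2.length
      · simp only [if_pos hnil]
        rw [Finset.sum_add_distrib]
        have h1 := hpoint (Q i).1
        have h2 := hpoint (Q i).2.1
        linarith
      · simp only [if_neg hnil]
        simp
    -- load decomposition
    have key2 : load F Q s(u,v) ≤ ends F Q {v}
        + ∑ c ∈ ch, (((univ.filter (fun i => s(u,v) ∈ (Q i).2.2.edges))
            ∩ (univ.filter (fun i => s(v,c) ∈ (Q i).2.2.edges))).card) := by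
      set S : Finset ι := univ.filter (fun i => s(u,v) ∈ (Q i).2.2.edges) with hS
      set A1 : Finset ι := S.filter (fun i => (Q i).1 = v ∨ (Q i).2.1 = v) with hA1d
      set A2 : Finset ι := S.filter (fun i => ¬((Q i).1 = v ∨ (Q i).2.1 = v)) with hA2d
      have hsplit : A1.card + A2.card = S.card :=
        Finset.card_filter_add_card_filter_not _
      have hA1 : A1.card ≤ ends F Q {v} := by
        have hterm : ∀ i ∈ A1, 1 ≤ (if 0 < (Q i).2.2.length then
            ((if (Q i).1 ∈ ({v}:Finset V) then (1:ℕ) else 0)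
              + (if (Q i).2.1 ∈ ({v}:Finset V) then 1 else 0)) else 0) := by
          intro i hi
          rw [hA1d, Finset.mem_filter, hS, Finset.mem_filter] at hi
          obtain ⟨⟨-, he⟩, hor⟩ := hi
          have hlen : 0 < (Q i).2.2.length := by
            have h1 := (Q i).2.2.length_edges
            have h2 : (Q i).2.2.edges ≠ [] := List.ne_nil_of_mem he
            have := List.length_pos_iff.mpr h2
            omega
          rw [if_pos hlen]
          rcases hor with h | h <;> simp [h]
        calc A1.card = ∑ _i ∈ A1, 1 := by simp
          _ ≤ ∑ i ∈ A1, (if 0 < (Q i).2.2.length then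
              ((if (Q i).1 ∈ ({v}:Finset V) then (1:ℕ) else 0)
                + (if (Q i).2.1 ∈ ({v}:Finset V) then 1 else 0)) else 0) :=
            Finset.sum_le_sum hterm
          _ ≤ ends F Q {v} := Finset.sum_le_sum_of_subset (Finset.subset_univ _)
      have hA2 : A2 ⊆ ch.biUnion (fun c => S ∩ (univ.filter (fun i => s(v,c) ∈ (Q i).2.2.edges))) := by
        intro i hi
        rw [hA2d, Finset.mem_filter, hS, Finset.mem_filter] at hi
        obtain ⟨⟨-, he⟩, hnor⟩ := hi
        push_neg at hnor
        obtain ⟨ha, hb⟩ := hnor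
        have hp : (Q i).2.2.IsPath := hpath i
        have hv : v ∈ (Q i).2.2.support := (Q i).2.2.snd_mem_support_of_mem_edges he
        have hnodup : (((Q i).2.2.takeUntil v hv).edges ++ ((Q i).2.2.dropUntil v hv).edges).Nodup := by
          rw [← Walk.edges_append, (Q i).2.2.take_spec hv]
          exact hp.isTrail.edges_nodup
        have hdisj := List.disjoint_of_nodup_append hnodup
        obtain ⟨x, hvx, t', ht'⟩ :=
          Walk.exists_eq_cons_of_ne (Ne.symm ha) ((Q i).2.2.takeUntil v hv).reverse
        have hf1 : s(v,x) ∈ ((Q i).2.2.takeUntil v hv).edges := by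
          have hh : s(v,x) ∈ ((Q i).2.2.takeUntil v hv).reverse.edges := by
            rw [ht']; simp
          rwa [Walk.edges_reverse, List.mem_reverse] at hh
        obtain ⟨y, hvy, d', hd'⟩ :=
          Walk.exists_eq_cons_of_ne (Ne.symm hb) ((Q i).2.2.dropUntil v hv)
        have hf2 : s(v,y) ∈ ((Q i).2.2.dropUntil v hv).edges := by rw [hd']; simp
        have hf12 : s(v,x) ≠ s(v,y) := fun h => (List.disjoint_left.mp hdisj hf1) (h ▸ hf2)
        have hget : ∃ cc, F.Adj v cc ∧ s(v,cc) ≠ s(u,v) ∧ s(v,cc) ∈ (Q i).2.2.edges := by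
          by_cases hex : s(v,x) = s(u,v)
          · exact ⟨y, hvy, fun h => hf12 (hex.trans h.symm),
              (Q i).2.2.edges_dropUntil_subset hv hf2⟩
          · exact ⟨x, hvx, hex, (Q i).2.2.edges_takeUntil_subset hv hf1⟩
        obtain ⟨cc, hvcc, hccne, hccp⟩ := hget
        have hccu : cc ≠ u := fun h => hccne (by rw [h, Sym2.eq_swap])
        have hccused : s(v,cc) ∈ used F Q := mem_used.mpr ⟨i, hccp⟩
        refine Finset.mem_biUnion.mpr ⟨cc, (hchmem cc).mpr ⟨hvcc, hccu, hccused⟩, ?_⟩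
        rw [Finset.mem_inter, hS, Finset.mem_filter, Finset.mem_filter]
        exact ⟨⟨Finset.mem_univ i, he⟩, Finset.mem_univ i, hccp⟩
      have hA2c : A2.card ≤ ∑ c ∈ ch, (S ∩ (univ.filter (fun i => s(v,c) ∈ (Q i).2.2.edges))).card :=
        le_trans (Finset.card_le_card hA2) (Finset.card_biUnion_le)
      have : load F Q s(u,v) = S.card := rfl
      omega
    -- incomparability
    have key3 : ∀ c ∈ ch, (((univ.filter (fun i => s(u,v) ∈ (Q i).2.2.edges))
          ∩ (univ.filter (fun i => s(v,c) ∈ (Q i).2.2.edges))).card) + 1 ≤ load F Q s(v,c) := by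
      intro c hc
      obtain ⟨j, hjf, hje⟩ := hirr s(v,c) ((hchmem c).mp hc).2.2 s(u,v) hus (hfne c hc)
      have hss : (univ.filter (fun i => s(u,v) ∈ (Q i).2.2.edges))
          ∩ (univ.filter (fun i => s(v,c) ∈ (Q i).2.2.edges))
          ⊂ univ.filter (fun i => s(v,c) ∈ (Q i).2.2.edges) := by
        refine (Finset.ssubset_iff_of_subset Finset.inter_subset_right).mpr ?_
        refine ⟨j, Finset.mem_filter.mpr ⟨Finset.mem_univ j, hjf⟩, ?_⟩
        rw [Finset.mem_inter, Finset.mem_filter]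
        rintro ⟨⟨-, hj⟩, -⟩
        exact hje hj
      have := Finset.card_lt_card hss
      unfold load
      omega
    -- coverage of inside edges
    have key1 : (inE F Q u v).card ≤ ch.card + ∑ c ∈ ch, (inE F Q v c).card := by
      have hsub : inE F Q u v ⊆ (ch.image (fun c => s(v,c))) ∪ ch.biUnion (fun c => inE F Q v c) := by
        intro g hg
        rw [inE, Finset.mem_filter] at hg
        obtain ⟨hgu, hgne, w, hwg, hws⟩ := hg
        obtain ⟨p₀, hp₀e, hp₀u⟩ := mem_side.mp hws
        have hqp : p₀.bypass.IsPath := p₀.bypass_isPath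
        have hqe : s(u,v) ∉ p₀.bypass.edges := fun h => hp₀e (p₀.edges_bypass_subset h)
        have hqu : ∀ g' ∈ p₀.bypass.edges, g' ∈ used F Q :=
          fun g' h => hp₀u g' (p₀.edges_bypass_subset h)
        by_cases hwv : w = v
        · subst hwv
          obtain ⟨z, rfl⟩ := Sym2.mem_iff_exists.mp hwg
          have hadj : F.Adj w z := (F.mem_edgeSet).mp (used_subset_edgeSet hgu)
          have hzu : z ≠ u := fun h => hgne (by rw [h]; exact Sym2.eq_swap)
          exact Finset.mem_union_left _
            (Finset.mem_image.mpr ⟨z, (hchmem z).mpr ⟨hadj, hzu, hgu⟩, rfl⟩)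
        · obtain ⟨cc, hvcc, r, hr⟩ := Walk.exists_eq_cons_of_ne (Ne.symm hwv) p₀.bypass.reverse
          have hfq : s(v,cc) ∈ p₀.bypass.edges := by
            have hh : s(v,cc) ∈ p₀.bypass.reverse.edges := by rw [hr]; simp
            rwa [Walk.edges_reverse, List.mem_reverse] at hh
          have hfused : s(v,cc) ∈ used F Q := hqu _ hfq
          have hfne' : s(v,cc) ≠ s(u,v) := fun h => hqe (h ▸ hfq)
          have hccu : cc ≠ u := fun h => hfne' (by rw [h, Sym2.eq_swap])
          have hcc_ch : cc ∈ ch := (hchmem cc).mpr ⟨hvcc, hccu, hfused⟩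
          by_cases hgf : g = s(v,cc)
          · exact Finset.mem_union_left _ (Finset.mem_image.mpr ⟨cc, hcc_ch, hgf.symm⟩)
          · refine Finset.mem_union_right _ (Finset.mem_biUnion.mpr ⟨cc, hcc_ch, ?_⟩)
            rw [inE, Finset.mem_filter]
            refine ⟨hgu, hgf, w, hwg, ?_⟩
            refine mem_side.mpr ⟨r.reverse, ?_, ?_⟩
            · rw [Walk.edges_reverse, List.mem_reverse]
              have hnd : p₀.bypass.reverse.edges.Nodup := by
                rw [Walk.edges_reverse]
                exact List.nodup_reverse.mpr hqp.isTrail.edges_nodup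
              rw [hr, Walk.edges_cons] at hnd
              exact fun h => (List.nodup_cons.mp hnd).1 h
            · intro g' hg'
              rw [Walk.edges_reverse, List.mem_reverse] at hg'
              apply hqu
              have hh : g' ∈ p₀.bypass.reverse.edges := by
                rw [hr, Walk.edges_cons]; exact List.mem_cons_of_mem _ hg'
              rwa [Walk.edges_reverse, List.mem_reverse] at hh
      calc (inE F Q u v).card
          ≤ ((ch.image (fun c => s(v,c))) ∪ ch.biUnion (fun c => inE F Q v c)).card :=
            Finset.card_le_card hsub
        _ ≤ (ch.image (fun c => s(v,c))).card + (ch.biUnion (fun c => inE F Q v c)).card :=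
            Finset.card_union_le _ _
        _ ≤ ch.card + ∑ c ∈ ch, (inE F Q v c).card :=
            add_le_add Finset.card_image_le Finset.card_biUnion_le
    -- combine
    have hsum3 : ∑ c ∈ ch, ((((univ.filter (fun i => s(u,v) ∈ (Q i).2.2.edges))
          ∩ (univ.filter (fun i => s(v,c) ∈ (Q i).2.2.edges))).card) + 1)
        ≤ ∑ c ∈ ch, load F Q s(v,c) := Finset.sum_le_sum key3
    have hsum4 : ∑ c ∈ ch, ((inE F Q v c).card + load F Q s(v,c))
        ≤ ∑ c ∈ ch, ends F Q (side F Q v c) := Finset.sum_le_sum key4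
    rw [Finset.sum_add_distrib] at hsum3 hsum4
    have hchc : ∑ _c ∈ ch, (1:ℕ) = ch.card := by simp
    linarith


lemma exists_edge_at_start {a b : V} (p : F.Walk a b) (h : 0 < p.length) :
    ∃ z, s(a, z) ∈ p.edges := by
  cases p with
  | nil => simp at h
  | cons h' q => exact ⟨_, by rw [Walk.edges_cons]; exact List.mem_cons_self⟩

lemma exists_edge_at_end {a b : V} (p : F.Walk a b) (h : 0 < p.length) :
    ∃ z, s(b, z) ∈ p.edges := by
  obtain ⟨z, hz⟩ := exists_edge_at_start p.reverse (by rwa [Walk.length_reverse])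
  exact ⟨z, by rwa [Walk.edges_reverse, List.mem_reverse] at hz⟩

lemma sum_len_zero (hQ : used F Q = ∅) : ∑ i, (Q i).2.2.length = 0 := by
  apply Finset.sum_eq_zero
  intro i _
  by_contra h
  have hlen : 0 < (Q i).2.2.length := Nat.pos_of_ne_zero h
  have hne : (Q i).2.2.edges ≠ [] := by
    intro hh
    have h1 := (Q i).2.2.length_edges
    rw [hh] at h1
    simp at h1
    omega
  obtain ⟨e, he⟩ := List.exists_mem_of_ne_nil _ hne
  have : e ∈ used F Q := mem_used.mpr ⟨i, he⟩
  simp [hQ] at this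

lemma double_count (hpath : ∀ i, (Q i).2.2.IsPath) (T : Finset ι) (B : Finset (Sym2 V))
    (h1 : ∀ i ∈ T, ∀ e ∈ (Q i).2.2.edges, e ∈ B)
    (h2 : ∀ e ∈ B, ∀ i, e ∈ (Q i).2.2.edges → i ∈ T) :
    ∑ i ∈ T, (Q i).2.2.length = ∑ e ∈ B, load F Q e := by
  have step1 : ∀ i ∈ T, (Q i).2.2.length = (B.filter (fun e => e ∈ (Q i).2.2.edges)).card := by
    intro i hi
    have hfe : B.filter (fun e => e ∈ (Q i).2.2.edges) = (Q i).2.2.edges.toFinset := by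
      ext e
      simp only [Finset.mem_filter, List.mem_toFinset]
      exact ⟨fun h => h.2, fun h => ⟨h1 i hi e h, h⟩⟩
    rw [hfe, List.toFinset_card_of_nodup (hpath i).isTrail.edges_nodup, (Q i).2.2.length_edges]
  calc ∑ i ∈ T, (Q i).2.2.length
      = ∑ i ∈ T, (B.filter (fun e => e ∈ (Q i).2.2.edges)).card := Finset.sum_congr rfl step1
    _ = ∑ i ∈ T, ∑ e ∈ B, (if e ∈ (Q i).2.2.edges then (1:ℕ) else 0) := by
        apply Finset.sum_congr rfl; intro i _; exact Finset.card_filter _ _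
    _ = ∑ e ∈ B, ∑ i ∈ T, (if e ∈ (Q i).2.2.edges then (1:ℕ) else 0) := Finset.sum_comm
    _ = ∑ e ∈ B, load F Q e := by
        apply Finset.sum_congr rfl
        intro e he
        rw [← Finset.card_filter]
        unfold load
        congr 1
        ext i
        simp only [Finset.mem_filter, Finset.mem_univ, true_and]
        exact ⟨fun h => h.2, fun h => ⟨h2 e he i h, h⟩⟩

noncomputable def nilify (F : SimpleGraph V) (Q : ι → Σ u v : V, F.Walk u v) (s : Finset ι) :
    ι → Σ u v : V, F.Walk u v :=
  fun i => if i ∈ s then ⟨(Q i).1, (Q i).1, Walk.nil⟩ else Q i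

lemma nilify_of_mem {s : Finset ι} {i : ι} (h : i ∈ s) :
    nilify F Q s i = ⟨(Q i).1, (Q i).1, Walk.nil⟩ := by
  unfold nilify; rw [if_pos h]

lemma nilify_of_not_mem {s : Finset ι} {i : ι} (h : i ∉ s) :
    nilify F Q s i = Q i := by
  unfold nilify; rw [if_neg h]

lemma inner (hF : F.IsAcyclic) (c : ℕ) :
    ∀ (N : ℕ) (Q : ι → Σ u v : V, F.Walk u v),
    (∀ i, (Q i).2.2.IsPath) →
    (∀ e, load F Q e ≤ c) →
    (∀ e ∈ used F Q, ∀ e' ∈ used F Q, e ≠ e' →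
       ∃ i, e ∈ (Q i).2.2.edges ∧ e' ∉ (Q i).2.2.edges) →
    (used F Q).card ≤ N →
    ∑ i, (Q i).2.2.length ≤ 2 * c * (univ.filter (fun i => 0 < (Q i).2.2.length)).card := by
  intro N
  induction N with
  | zero =>
    intro Q hpath hload hirr hcard
    have : used F Q = ∅ := Finset.card_eq_zero.mp (Nat.le_zero.mp hcard)
    rw [sum_len_zero this]
    exact Nat.zero_le _
  | succ N ihN =>
    intro Q hpath hload hirr hcard
    rcases (used F Q).eq_empty_or_nonempty with hU | hU
    · rw [sum_len_zero hU]; exact Nat.zero_le _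
    obtain ⟨e₀, he₀⟩ := hU
    obtain ⟨u, v, rfl⟩ : ∃ u v, e₀ = s(u,v) :=
      Sym2.ind (f := fun e => ∃ u v, e = s(u,v)) (fun x y => ⟨x, y, rfl⟩) e₀
    have huv : F.Adj u v := (F.mem_edgeSet).mp (used_subset_edgeSet he₀)
    set A : Finset (Sym2 V) := insert s(u,v) (inE F Q u v ∪ inE F Q v u) with hA
    set comp : Finset ι := univ.filter (fun i => ∃ g ∈ A, g ∈ (Q i).2.2.edges) with hcomp
    have hA_used : A ⊆ used F Q := by
      rw [hA]
      intro g hg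
      rcases Finset.mem_insert.mp hg with rfl | hg
      · exact he₀
      · rcases Finset.mem_union.mp hg with h | h
        · exact Finset.filter_subset _ _ h
        · exact Finset.filter_subset _ _ h
    have hA_side : ∀ g ∈ A, ∃ w, w ∈ g ∧ (w ∈ side F Q u v ∨ w ∈ side F Q v u) := by
      intro g hg
      rw [hA, Finset.mem_insert] at hg
      rcases hg with rfl | hg
      · exact ⟨v, Sym2.mem_mk_right u v, Or.inl v_mem_side⟩
      rcases Finset.mem_union.mp hg with hg | hg
      · rw [inE, Finset.mem_filter] at hg
        obtain ⟨-, -, w, hw1, hw2⟩ := hg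
        exact ⟨w, hw1, Or.inl hw2⟩
      · rw [inE, Finset.mem_filter] at hg
        obtain ⟨-, -, w, hw1, hw2⟩ := hg
        exact ⟨w, hw1, Or.inr hw2⟩
    -- closure of the component
    have hCL : ∀ i ∈ comp, ∀ e' ∈ (Q i).2.2.edges, e' ∈ A := by
      intro i hi e' he'
      rw [hcomp, Finset.mem_filter] at hi
      obtain ⟨-, g, hgA, hgi⟩ := hi
      by_cases he'e : e' = s(u,v)
      · rw [hA, he'e]; exact Finset.mem_insert_self _ _
      obtain ⟨w, hwg, hwside⟩ := hA_side g hgA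
      obtain ⟨z, hgz⟩ := Sym2.mem_iff_exists.mp hwg
      have hwsup : w ∈ (Q i).2.2.support :=
        (Q i).2.2.fst_mem_support_of_mem_edges (hgz ▸ hgi)
      obtain ⟨x, y, rfl⟩ : ∃ x y, e' = s(x,y) :=
        Sym2.ind (f := fun e => ∃ x y, e = s(x,y)) (fun x y => ⟨x, y, rfl⟩) e'
      have hxsup : x ∈ (Q i).2.2.support := (Q i).2.2.fst_mem_support_of_mem_edges he'
      have hW₁u : ∀ g' ∈ ((((Q i).2.2.takeUntil x hxsup).reverse).append
          ((Q i).2.2.takeUntil w hwsup)).edges, g' ∈ used F Q := by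
        intro g' hg'
        rw [Walk.edges_append, List.mem_append, Walk.edges_reverse, List.mem_reverse] at hg'
        refine mem_used.mpr ⟨i, ?_⟩
        rcases hg' with h | h
        · exact (Q i).2.2.edges_takeUntil_subset hxsup h
        · exact (Q i).2.2.edges_takeUntil_subset hwsup h
      have hxside : x ∈ side F Q u v ∨ x ∈ side F Q v u := by
        rcases hwside with hw | hw
        · obtain ⟨pw, hpwe, hpwu⟩ := mem_side.mp hw
          refine reach_side hF huv (((((Q i).2.2.takeUntil x hxsup).reverse).append
            ((Q i).2.2.takeUntil w hwsup)).append pw) ?_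
          intro g' hg'
          rw [Walk.edges_append, List.mem_append] at hg'
          rcases hg' with h | h
          exacts [hW₁u _ h, hpwu _ h]
        · obtain ⟨pw, hpwe, hpwu⟩ := mem_side.mp hw
          refine Or.symm (reach_side hF huv.symm (((((Q i).2.2.takeUntil x hxsup).reverse).append
            ((Q i).2.2.takeUntil w hwsup)).append pw) ?_)
          intro g' hg'
          rw [Walk.edges_append, List.mem_append] at hg'
          rcases hg' with h | h
          exacts [hW₁u _ h, hpwu _ h]
      have he'used : s(x,y) ∈ used F Q := mem_used.mpr ⟨i, he'⟩
      rw [hA]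
      rcases hxside with h | h
      · refine Finset.mem_insert_of_mem (Finset.mem_union_left _ ?_)
        rw [inE, Finset.mem_filter]
        exact ⟨he'used, he'e, x, Sym2.mem_mk_left x y, h⟩
      · refine Finset.mem_insert_of_mem (Finset.mem_union_right _ ?_)
        rw [inE, Finset.mem_filter]
        exact ⟨he'used, fun hh => he'e (hh.trans Sym2.eq_swap), x, Sym2.mem_mk_left x y, h⟩
    -- modified family with the component replaced by trivial walks
    have hQ'edges : ∀ i, (nilify F Q comp i).2.2.edges = if i ∈ comp then [] else (Q i).2.2.edges := by
      intro i
      by_cases h : i ∈ comp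
      · rw [nilify_of_mem h, if_pos h]; rfl
      · rw [nilify_of_not_mem h, if_neg h]
    have hQ'len : ∀ i, (nilify F Q comp i).2.2.length = if i ∈ comp then 0 else (Q i).2.2.length := by
      intro i
      by_cases h : i ∈ comp
      · rw [nilify_of_mem h, if_pos h]; rfl
      · rw [nilify_of_not_mem h, if_neg h]
    have hused' : used F (nilify F Q comp) = used F Q \ A := by
      ext e
      simp only [mem_used, Finset.mem_sdiff]
      constructor
      · rintro ⟨i, hi⟩
        rw [hQ'edges i] at hi
        by_cases h : i ∈ comp
        · rw [if_pos h] at hi; simp at hi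
        · rw [if_neg h] at hi
          refine ⟨⟨i, hi⟩, fun heA => h ?_⟩
          rw [hcomp, Finset.mem_filter]
          exact ⟨Finset.mem_univ i, e, heA, hi⟩
      · rintro ⟨⟨i, hi⟩, heA⟩
        have hic : i ∉ comp := fun h => heA (hCL i h e hi)
        exact ⟨i, by rw [hQ'edges i, if_neg hic]; exact hi⟩
    have hpath' : ∀ i, (nilify F Q comp i).2.2.IsPath := by
      intro i
      by_cases h : i ∈ comp
      · rw [nilify_of_mem h]; exact Walk.IsPath.nil
      · rw [nilify_of_not_mem h]; exact hpath i
    have hedgesub : ∀ i e, e ∈ (nilify F Q comp i).2.2.edges → e ∈ (Q i).2.2.edges := by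
      intro i e he
      rw [hQ'edges i] at he
      by_cases h : i ∈ comp
      · rw [if_pos h] at he; simp at he
      · rwa [if_neg h] at he
    have hload' : ∀ e, load F (nilify F Q comp) e ≤ c := by
      intro e
      refine le_trans (Finset.card_le_card ?_) (hload e)
      intro i hi
      rw [Finset.mem_filter] at hi ⊢
      exact ⟨hi.1, hedgesub i e hi.2⟩
    have hirr' : ∀ e ∈ used F (nilify F Q comp), ∀ e' ∈ used F (nilify F Q comp), e ≠ e' →
        ∃ i, e ∈ (nilify F Q comp i).2.2.edges ∧ e' ∉ (nilify F Q comp i).2.2.edges := by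
      intro e he e' he' hne
      rw [hused', Finset.mem_sdiff] at he he'
      obtain ⟨j, hj1, hj2⟩ := hirr e he.1 e' he'.1 hne
      have hjc : j ∉ comp := fun h => he.2 (hCL j h e hj1)
      refine ⟨j, ?_, ?_⟩
      · rw [hQ'edges j, if_neg hjc]; exact hj1
      · rw [hQ'edges j, if_neg hjc]; exact hj2
    have hcard' : (used F (nilify F Q comp)).card ≤ N := by
      have hsub : used F (nilify F Q comp) ⊆ (used F Q).erase s(u,v) := by
        rw [hused']
        intro e he
        rw [Finset.mem_sdiff] at he
        refine Finset.mem_erase.mpr ⟨?_, he.1⟩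
        rintro rfl
        exact he.2 (by rw [hA]; exact Finset.mem_insert_self _ _)
      have h1 := Finset.card_le_card hsub
      have h2 : ((used F Q).erase s(u,v)).card = (used F Q).card - 1 :=
        Finset.card_erase_of_mem he₀
      omega
    have IH := ihN (nilify F Q comp) hpath' hload' hirr' hcard'
    -- sum splitting
    have hsplit : ∑ i, (Q i).2.2.length
        = ∑ i ∈ comp, (Q i).2.2.length + ∑ i ∈ univ.filter (fun i => i ∉ comp), (Q i).2.2.length := by
      rw [← Finset.sum_filter_add_sum_filter_not univ (fun i => i ∈ comp)]
      congr 1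
      apply Finset.sum_congr _ (fun _ _ => rfl)
      ext i
      simp
    have hQ'sum : ∑ i, (nilify F Q comp i).2.2.length
        = ∑ i ∈ univ.filter (fun i => i ∉ comp), (Q i).2.2.length := by
      rw [← Finset.sum_filter_add_sum_filter_not univ (fun i => i ∈ comp)]
      have hz : ∑ i ∈ univ.filter (fun i => i ∈ comp), (nilify F Q comp i).2.2.length = 0 := by
        apply Finset.sum_eq_zero
        intro i hi
        rw [Finset.mem_filter] at hi
        rw [hQ'len i, if_pos hi.2]
      rw [hz, zero_add]
      apply Finset.sum_congr rfl
      intro i hi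
      rw [Finset.mem_filter] at hi
      rw [hQ'len i, if_neg hi.2]
    have hDC : ∑ i ∈ comp, (Q i).2.2.length = ∑ e ∈ A, load F Q e := by
      apply double_count hpath
      · intro i hi e he; exact hCL i hi e he
      · intro e he i hi
        rw [hcomp, Finset.mem_filter]
        exact ⟨Finset.mem_univ i, e, he, hi⟩
    have hAcard : ∑ e ∈ A, load F Q e ≤ c * A.card := by
      calc ∑ e ∈ A, load F Q e ≤ A.card • c := Finset.sum_le_card_nsmul A _ c (fun e _ => hload e)
        _ = c * A.card := by rw [smul_eq_mul, Nat.mul_comm]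
    -- side bounds
    have hSB1 := side_bound hF hpath hirr (side F Q u v).card u v huv he₀ le_rfl
    have he₀' : s(v,u) ∈ used F Q := by rwa [Sym2.eq_swap]
    have hSB2 := side_bound hF hpath hirr (side F Q v u).card v u huv.symm he₀' le_rfl
    have hload_eq : load F Q s(v,u) = load F Q s(u,v) := by rw [Sym2.eq_swap]
    have hload_pos : 1 ≤ load F Q s(u,v) := by
      obtain ⟨i, hi⟩ := mem_used.mp he₀
      exact Finset.card_pos.mpr ⟨i, Finset.mem_filter.mpr ⟨Finset.mem_univ i, hi⟩⟩
    -- every end lying in a side forces membership in comp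
    have hEND : ∀ i, 0 < (Q i).2.2.length → ∀ x, (x = (Q i).1 ∨ x = (Q i).2.1) →
        (x ∈ side F Q u v ∨ x ∈ side F Q v u) → i ∈ comp := by
      intro i hlen x hx hxs
      have hex : ∃ z, s(x, z) ∈ (Q i).2.2.edges := by
        rcases hx with rfl | rfl
        · exact exists_edge_at_start _ hlen
        · exact exists_edge_at_end _ hlen
      obtain ⟨z, hz⟩ := hex
      have hzu : s(x,z) ∈ used F Q := mem_used.mpr ⟨i, hz⟩
      rw [hcomp, Finset.mem_filter]
      refine ⟨Finset.mem_univ i, s(x,z), ?_, hz⟩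
      rw [hA]
      by_cases hh : s(x,z) = s(u,v)
      · rw [hh]; exact Finset.mem_insert_self _ _
      rcases hxs with h | h
      · refine Finset.mem_insert_of_mem (Finset.mem_union_left _ ?_)
        rw [inE, Finset.mem_filter]
        exact ⟨hzu, hh, x, Sym2.mem_mk_left x z, h⟩
      · refine Finset.mem_insert_of_mem (Finset.mem_union_right _ ?_)
        rw [inE, Finset.mem_filter]
        exact ⟨hzu, fun h2 => hh (h2.trans Sym2.eq_swap), x, Sym2.mem_mk_left x z, h⟩
    have hends : ends F Q (side F Q u v) + ends F Q (side F Q v u) ≤ 2 * comp.card := by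
      unfold ends
      rw [← Finset.sum_add_distrib, hcomp, Finset.card_filter, Finset.mul_sum]
      apply Finset.sum_le_sum
      intro i _
      by_cases hnil : 0 < (Q i).2.2.length
      · simp only [if_pos hnil]
        by_cases hic : i ∈ comp
        · have hcp : ∃ g ∈ A, g ∈ (Q i).2.2.edges := by
            rw [hcomp, Finset.mem_filter] at hic; exact hic.2
          rw [if_pos hcp]
          have hx : ∀ x:V, (if x ∈ side F Q u v then (1:ℕ) else 0)
              + (if x ∈ side F Q v u then 1 else 0) ≤ 1 := by
            intro x
            by_cases h1 : x ∈ side F Q u v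
            · rw [if_pos h1, if_neg (fun h2 => side_disjoint hF huv h1 h2)]
            · rw [if_neg h1]
              split <;> omega
          have h1 := hx (Q i).1
          have h2 := hx (Q i).2.1
          omega
        · have hnc : ∀ x:V, (x = (Q i).1 ∨ x = (Q i).2.1) → ∀ X ∈ [side F Q u v, side F Q v u], x ∉ X := by
            intro x hx X hX hmem
            apply hic
            refine hEND i hnil x hx ?_
            simp only [List.mem_cons, List.mem_singleton] at hX
            rcases hX with rfl | rfl | h
            · exact Or.inl hmem
            · exact Or.inr hmem
            · simp at h
          have e1 : (if (Q i).1 ∈ side F Q u v then (1:ℕ) else 0) = 0 := by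
            rw [if_neg (hnc _ (Or.inl rfl) _ (by simp))]
          have e2 : (if (Q i).2.1 ∈ side F Q u v then (1:ℕ) else 0) = 0 := by
            rw [if_neg (hnc _ (Or.inr rfl) _ (by simp))]
          have e3 : (if (Q i).1 ∈ side F Q v u then (1:ℕ) else 0) = 0 := by
            rw [if_neg (hnc _ (Or.inl rfl) _ (by simp))]
          have e4 : (if (Q i).2.1 ∈ side F Q v u then (1:ℕ) else 0) = 0 := by
            rw [if_neg (hnc _ (Or.inr rfl) _ (by simp))]
          rw [e1, e2, e3, e4]
          simp
      · simp only [if_neg hnil]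
        simp
    have hAbound : A.card ≤ 2 * comp.card := by
      have h1 : A.card ≤ 1 + ((inE F Q u v).card + (inE F Q v u).card) := by
        calc A.card ≤ (inE F Q u v ∪ inE F Q v u).card + 1 := by
              rw [hA]; exact Finset.card_insert_le _ _
          _ ≤ ((inE F Q u v).card + (inE F Q v u).card) + 1 := by
              have := Finset.card_union_le (inE F Q u v) (inE F Q v u)
              omega
          _ = 1 + ((inE F Q u v).card + (inE F Q v u).card) := by omega
      omega
    -- comp count vs nonnil counts
    have hcompnn : comp ⊆ univ.filter (fun i => 0 < (Q i).2.2.length) := by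
      intro i hi
      rw [hcomp, Finset.mem_filter] at hi
      obtain ⟨-, g, hgA, hgi⟩ := hi
      rw [Finset.mem_filter]
      refine ⟨Finset.mem_univ i, ?_⟩
      have h1 := (Q i).2.2.length_edges
      have h2 := List.length_pos_iff.mpr (List.ne_nil_of_mem hgi)
      omega
    have hnn : (univ.filter (fun i => 0 < (Q i).2.2.length)).card
        = comp.card + (univ.filter (fun i => 0 < (nilify F Q comp i).2.2.length)).card := by
      have h1 : univ.filter (fun i => 0 < (nilify F Q comp i).2.2.length)
          = (univ.filter (fun i => 0 < (Q i).2.2.length)) \ comp := by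
        ext i
        simp only [Finset.mem_filter, Finset.mem_sdiff, Finset.mem_univ, true_and]
        rw [hQ'len i]
        by_cases h : i ∈ comp
        · rw [if_pos h]; simp [h]
        · rw [if_neg h]; simp [h]
      rw [h1, Finset.card_sdiff_of_subset hcompnn]
      have := Finset.card_le_card hcompnn
      omega
    calc ∑ i, (Q i).2.2.length
        = ∑ e ∈ A, load F Q e + ∑ i, (nilify F Q comp i).2.2.length := by rw [hsplit, hDC, hQ'sum]
      _ ≤ c * A.card + 2 * c * (univ.filter (fun i => 0 < (nilify F Q comp i).2.2.length)).card :=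
          add_le_add hAcard IH
      _ ≤ c * (2 * comp.card) + 2 * c * (univ.filter (fun i => 0 < (nilify F Q comp i).2.2.length)).card :=
          Nat.add_le_add_right (Nat.mul_le_mul_left c hAbound) _
      _ = 2 * c * (comp.card + (univ.filter (fun i => 0 < (nilify F Q comp i).2.2.length)).card) := by ring
      _ = 2 * c * (univ.filter (fun i => 0 < (Q i).2.2.length)).card := by rw [hnn]

end IrrRoutingAux


/-- In a forest `F`, for any non-empty irreducible routing `S` with
congestion `c`, the sum of the lengths of the paths is at most `2 * c * |S|`
(i.e. the average path length is at most `2c`). -/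
theorem forest_irreducible_routing_avg_length
    {V : Type*} [Fintype V] [DecidableEq V]
    (F : SimpleGraph V) (hF : F.IsAcyclic)
    {ι : Type*} [Fintype ι] [Nonempty ι]
    (P : ι → Σ u v : V, F.Walk u v)
    (hpath : ∀ i, (P i).2.2.IsPath)
    (c : ℕ)
    (hcong : ∀ e : Sym2 V,
      (Finset.univ.filter fun i => e ∈ (P i).2.2.edges).card ≤ c)
    (hirr : ∀ e ∈ F.edgeSet, ∀ e' ∈ F.edgeSet, e ≠ e' →
      ¬ (∀ i, e ∈ (P i).2.2.edges → e' ∈ (P i).2.2.edges)) :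
    ∑ i, (P i).2.2.length ≤ 2 * c * Fintype.card ι := by
  have hload : ∀ e, IrrRoutingAux.load F P e ≤ c := by
    intro e
    unfold IrrRoutingAux.load
    rw [Finset.filter_congr_decidable]
    exact hcong e
  have hirr' : ∀ e ∈ IrrRoutingAux.used F P, ∀ e' ∈ IrrRoutingAux.used F P, e ≠ e' →
      ∃ i, e ∈ (P i).2.2.edges ∧ e' ∉ (P i).2.2.edges := by
    intro e he e' he' hne
    have h1 := hirr e (IrrRoutingAux.used_subset_edgeSet he) e'
      (IrrRoutingAux.used_subset_edgeSet he') hne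
    push_neg at h1
    exact h1
  have hmain := IrrRoutingAux.inner hF c (IrrRoutingAux.used F P).card P hpath hload hirr' le_rfl
  refine le_trans hmain ?_
  have h2 : (Finset.univ.filter (fun i => 0 < (P i).2.2.length)).card ≤ Fintype.card ι := by
    simpa using Finset.card_filter_le Finset.univ (fun i => 0 < (P i).2.2.length)
  exact Nat.mul_le_mul_left _ h2
end

section
/- Let c ≥ 1 be an integer and consider the graph G obtained from a path of length c−1 by attaching a star with c−1 leaves to one of its endpoints. The family consisting of the c−1 paths of length c (each from a leaf of the star through the star center along the whole original path) together with the 2c−2 paths of length 1 given by taking each edge of G twice is an irreducible routing of G with congestion c, and its average path length equals (c+2)/3. -/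
open SimpleGraph Sum

/-- The graph obtained from a path on vertices `inl 0, …, inl (c-1)` (length `c-1`)
by attaching a star with `c-1` leaves (the vertices `inr j`) to the endpoint `inl 0`. -/
def spGraph (c : ℕ) : SimpleGraph (Fin c ⊕ Fin (c - 1)) :=
  SimpleGraph.fromEdgeSet
    ({e | ∃ (i j : Fin c), (i : ℕ) + 1 = (j : ℕ) ∧ e = s(inl i, inl j)} ∪
     {e | ∃ (h : 0 < c) (j : Fin (c - 1)), e = s(inl ⟨0, h⟩, inr j)})

lemma spGraph_adj_path (c : ℕ) (i j : Fin c) (hij : (i : ℕ) + 1 = (j : ℕ)) :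
    (spGraph c).Adj (inl i) (inl j) := by
  rw [spGraph, SimpleGraph.fromEdgeSet_adj]
  refine ⟨Or.inl ⟨i, j, hij, rfl⟩, ?_⟩
  intro h
  have : i = j := Sum.inl.inj h
  subst this
  omega

lemma spGraph_adj_star (c : ℕ) (h : 0 < c) (j : Fin (c - 1)) :
    (spGraph c).Adj (inl ⟨0, h⟩) (inr j) := by
  rw [spGraph, SimpleGraph.fromEdgeSet_adj]
  exact ⟨Or.inr ⟨h, j, rfl⟩, by simp⟩

/-- The "spine": the walk from `inl 0` to `inl n` along the original path. -/
def spSpine (c : ℕ) (hc : 0 < c) : (n : ℕ) → (h : n < c) →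
    (spGraph c).Walk (inl ⟨0, hc⟩) (inl ⟨n, h⟩)
  | 0, _ => SimpleGraph.Walk.nil
  | n + 1, h =>
    (spSpine c hc n (Nat.lt_of_succ_lt h)).concat
      (spGraph_adj_path c ⟨n, Nat.lt_of_succ_lt h⟩ ⟨n + 1, h⟩ rfl)

/-- The family consisting of the `c-1` long paths (each from a star leaf through the
star center along the whole original path, of length `c`), indexed by `inl j`, together
with the `2c-2` paths of length 1, one for each edge of the graph: `inr (inl i)` is the
`i`-th path edge and `inr (inr j)` is the `j`-th star edge. -/
def spFamily (c : ℕ) (hc : 0 < c) :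
    (Fin (c - 1) ⊕ Fin (c - 1) ⊕ Fin (c - 1)) →
      Σ (u v : Fin c ⊕ Fin (c - 1)), (spGraph c).Walk u v
  | inl j =>
      ⟨inr j, inl ⟨c - 1, Nat.sub_lt hc one_pos⟩,
        SimpleGraph.Walk.cons ((spGraph_adj_star c hc j).symm)
          (spSpine c hc (c - 1) (Nat.sub_lt hc one_pos))⟩
  | inr (inl i) =>
      ⟨inl ⟨(i : ℕ), by have := i.2; omega⟩, inl ⟨(i : ℕ) + 1, by have := i.2; omega⟩,
        SimpleGraph.Walk.cons (spGraph_adj_path c _ _ rfl) SimpleGraph.Walk.nil⟩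
  | inr (inr j) =>
      ⟨inl ⟨0, hc⟩, inr j,
        SimpleGraph.Walk.cons (spGraph_adj_star c hc j) SimpleGraph.Walk.nil⟩

lemma spSpine_length (c : ℕ) (hc : 0 < c) (n : ℕ) (h : n < c) :
    (spSpine c hc n h).length = n := by
  induction n with
  | zero => rfl
  | succ n ih => simp [spSpine, SimpleGraph.Walk.length_concat, ih]

lemma spSpine_support (c : ℕ) (hc : 0 < c) (n : ℕ) (h : n < c) :
    ∀ x ∈ (spSpine c hc n h).support, ∃ k : Fin c, (k : ℕ) ≤ n ∧ x = inl k := by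
  induction n with
  | zero =>
    intro x hx
    simp [spSpine] at hx
    exact ⟨⟨0, hc⟩, le_refl _, hx⟩
  | succ n ih =>
    intro x hx
    rw [spSpine, SimpleGraph.Walk.support_concat] at hx
    rcases List.mem_append.1 hx with hx | hx
    · obtain ⟨k, hk, rfl⟩ := ih (Nat.lt_of_succ_lt h) x hx
      exact ⟨k, Nat.le_succ_of_le hk, rfl⟩
    · simp at hx
      exact ⟨⟨n + 1, h⟩, le_refl _, hx⟩

lemma spSpine_isPath (c : ℕ) (hc : 0 < c) (n : ℕ) (h : n < c) :
    (spSpine c hc n h).IsPath := by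
  induction n with
  | zero => exact SimpleGraph.Walk.IsPath.nil
  | succ n ih =>
    rw [spSpine, SimpleGraph.Walk.isPath_def, SimpleGraph.Walk.support_concat,
      List.nodup_append]
    refine ⟨(SimpleGraph.Walk.isPath_def _).1 (ih _), List.nodup_singleton _, ?_⟩
    intro x hx y hy hx'
    simp at hy; subst hy
    obtain ⟨k, hk, hxk⟩ := spSpine_support c hc n (Nat.lt_of_succ_lt h) x hx
    rw [hx'] at hxk
    have := Sum.inl.inj hxk
    have : n + 1 = (k : ℕ) := congrArg Fin.val this
    omega

lemma spSpine_edges_mem (c : ℕ) (hc : 0 < c) (n : ℕ) (h : n < c)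
    (i j : Fin c) (hij : (i : ℕ) + 1 = (j : ℕ)) (hj : (j : ℕ) ≤ n) :
    s(inl i, inl j) ∈ (spSpine c hc n h).edges := by
  induction n with
  | zero => omega
  | succ n ih =>
    rw [spSpine, SimpleGraph.Walk.edges_concat]
    rcases Nat.lt_or_ge (j : ℕ) (n + 1) with hj' | hj'
    · rw [List.concat_eq_append]; exact List.mem_append.2 (Or.inl (ih (Nat.lt_of_succ_lt h) (by omega)))
    · have hjv : (j : ℕ) = n + 1 := by omega
      have hj : j = ⟨n + 1, h⟩ := Fin.ext hjv
      have hi : i = ⟨n, Nat.lt_of_succ_lt h⟩ := Fin.ext (by show (i : ℕ) = n; omega)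
      subst hj; subst hi
      rw [List.concat_eq_append]; exact List.mem_append.2 (Or.inr (List.mem_singleton.2 rfl))

lemma spSpine_edges_sub (c : ℕ) (hc : 0 < c) (n : ℕ) (h : n < c) :
    ∀ e ∈ (spSpine c hc n h).edges,
      ∃ i j : Fin c, (i : ℕ) + 1 = (j : ℕ) ∧ e = s(inl i, inl j) := by
  induction n with
  | zero => intro e he; simp [spSpine] at he
  | succ n ih =>
    intro e he
    rw [spSpine, SimpleGraph.Walk.edges_concat] at he
    rw [List.concat_eq_append] at he; rcases List.mem_append.1 he with he | he
    · exact ih (Nat.lt_of_succ_lt h) e he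
    · simp at he
      exact ⟨⟨n, Nat.lt_of_succ_lt h⟩, ⟨n + 1, h⟩, rfl, he⟩

lemma spFamily_edges_inl (c : ℕ) (hc : 0 < c) (j : Fin (c - 1)) :
    ((spFamily c hc (inl j)).2.2).edges =
      s(inr j, inl ⟨0, hc⟩) :: (spSpine c hc (c - 1) (Nat.sub_lt hc one_pos)).edges := rfl

lemma spFamily_edges_inr_inl (c : ℕ) (hc : 0 < c) (i : Fin (c - 1)) :
    ((spFamily c hc (inr (inl i))).2.2).edges =
      [s(inl ⟨(i : ℕ), by have := i.2; omega⟩, inl ⟨(i : ℕ) + 1, by have := i.2; omega⟩)] := rfl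

lemma spFamily_edges_inr_inr (c : ℕ) (hc : 0 < c) (j : Fin (c - 1)) :
    ((spFamily c hc (inr (inr j))).2.2).edges = [s(inl ⟨0, hc⟩, inr j)] := rfl

lemma sym2_congr {α : Type*} {a b a' b' : α} (h1 : a = a') (h2 : b = b') :
    s(a, b) = s(a', b') := by rw [h1, h2]

/-- the above family is an irreducible routing of `spGraph c` with
congestion `c`, and its average path length equals `(c+2)/3` (stated multiplicatively:
`3 · (sum of lengths) = (c+2) · |S|`). -/
theorem spFamily_irreducible_congestion_avg (c : ℕ) (hc : 1 ≤ c) :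
    (∀ i, ((spFamily c hc i).2.2).IsPath) ∧
    (∀ e : Sym2 (Fin c ⊕ Fin (c - 1)),
      (Finset.univ.filter fun i => e ∈ ((spFamily c hc i).2.2).edges).card ≤ c) ∧
    (∀ e ∈ (spGraph c).edgeSet, ∀ e' ∈ (spGraph c).edgeSet, e ≠ e' →
      ¬ (∀ i, e ∈ ((spFamily c hc i).2.2).edges → e' ∈ ((spFamily c hc i).2.2).edges)) ∧
    3 * (∑ i, ((spFamily c hc i).2.2).length) =
      (c + 2) * Fintype.card (Fin (c - 1) ⊕ Fin (c - 1) ⊕ Fin (c - 1)) := by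
  classical
  have hc0 : 0 < c := hc
  refine ⟨?_, ?_, ?_, ?_⟩
  · -- all walks are paths
    rintro (j | i | j)
    · refine SimpleGraph.Walk.IsPath.cons (spSpine_isPath c hc _ _) ?_
      intro hmem
      obtain ⟨k, _, hk⟩ := spSpine_support c hc _ _ _ hmem
      exact Sum.inr_ne_inl hk
    · refine SimpleGraph.Walk.IsPath.cons (SimpleGraph.Walk.IsPath.nil) ?_
      simp only [SimpleGraph.Walk.support_nil, List.mem_singleton]
      intro hmem
      have := congrArg Fin.val (Sum.inl.inj hmem)
      simp at this
    · refine SimpleGraph.Walk.IsPath.cons (SimpleGraph.Walk.IsPath.nil) ?_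
      simp only [SimpleGraph.Walk.support_nil, List.mem_singleton]
      exact fun h => Sum.inl_ne_inr h
  · -- congestion
    intro e
    set S := Finset.univ.filter (fun i => e ∈ ((spFamily c hc i).2.2).edges) with hS
    have hsplit := Finset.card_filter_add_card_filter_not
      (s := S) (p := fun i => ∃ a, i = inl a)
    have h1 : (S.filter (fun i => ∃ a, i = inl a)).card ≤ c - 1 := by
      have hsub : S.filter (fun i => ∃ a, i = inl a) ⊆
          Finset.univ.image (inl : Fin (c - 1) → _) := by
        intro x hx
        rw [Finset.mem_filter] at hx
        obtain ⟨a, rfl⟩ := hx.2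
        exact Finset.mem_image.2 ⟨a, Finset.mem_univ _, rfl⟩
      calc (S.filter (fun i => ∃ a, i = inl a)).card
          ≤ (Finset.univ.image (inl : Fin (c - 1) → _)).card := Finset.card_le_card hsub
        _ = c - 1 := by rw [Finset.card_image_of_injective _ Sum.inl_injective]; simp
    have h2 : (S.filter (fun i => ¬ ∃ a, i = inl a)).card ≤ 1 := by
      rw [Finset.card_le_one]
      rintro (a | a) ha (b | b) hb
      · exact absurd ⟨a, rfl⟩ (Finset.mem_filter.1 ha).2
      · exact absurd ⟨a, rfl⟩ (Finset.mem_filter.1 ha).2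
      · exact absurd ⟨b, rfl⟩ (Finset.mem_filter.1 hb).2
      · have hea : e ∈ ((spFamily c hc (inr a)).2.2).edges :=
          (Finset.mem_filter.1 ((Finset.mem_filter.1 ha).1)).2
        have heb : e ∈ ((spFamily c hc (inr b)).2.2).edges :=
          (Finset.mem_filter.1 ((Finset.mem_filter.1 hb).1)).2
        rcases a with a | a <;> rcases b with b | b
        · rw [spFamily_edges_inr_inl, List.mem_singleton] at hea heb
          have h := hea ▸ heb
          rw [hea] at heb
          have : a = b := by
            rcases Sym2.eq_iff.1 heb with ⟨h1, _⟩ | ⟨h1, h2⟩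
            · exact Fin.ext (by simpa using congrArg Fin.val (Sum.inl.inj h1))
            · have e1 := congrArg Fin.val (Sum.inl.inj h1)
              have e2 := congrArg Fin.val (Sum.inl.inj h2)
              simp at e1 e2
              omega
          rw [this]
        · rw [spFamily_edges_inr_inl, List.mem_singleton] at hea
          rw [spFamily_edges_inr_inr, List.mem_singleton] at heb
          rw [hea] at heb
          rcases Sym2.eq_iff.1 heb with ⟨_, h1⟩ | ⟨h1, _⟩ <;> cases h1
        · rw [spFamily_edges_inr_inr, List.mem_singleton] at hea
          rw [spFamily_edges_inr_inl, List.mem_singleton] at heb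
          rw [hea] at heb
          rcases Sym2.eq_iff.1 heb with ⟨_, h1⟩ | ⟨_, h1⟩ <;> cases h1
        · rw [spFamily_edges_inr_inr, List.mem_singleton] at hea heb
          rw [hea] at heb
          have : a = b := by
            rcases Sym2.eq_iff.1 heb with ⟨_, h1⟩ | ⟨h1, _⟩
            · exact Sum.inr.inj h1
            · cases h1
          rw [this]
    omega
  · -- irreducibility
    intro e he e' he' hne
    rw [spGraph, SimpleGraph.edgeSet_fromEdgeSet] at he
    rcases he.1 with ⟨i, j, hij, rfl⟩ | ⟨h0, j, rfl⟩
    · have hi : (i : ℕ) < c - 1 := by have := j.2; omega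
      intro H
      have hkey : s(inl i, inl j) =
          s((inl ⟨(↑(⟨(i : ℕ), hi⟩ : Fin (c - 1)) : ℕ), by have := (⟨(i : ℕ), hi⟩ : Fin (c - 1)).2; omega⟩ :
              Fin c ⊕ Fin (c - 1)),
            inl ⟨(↑(⟨(i : ℕ), hi⟩ : Fin (c - 1)) : ℕ) + 1, by have := (⟨(i : ℕ), hi⟩ : Fin (c - 1)).2; omega⟩) :=
        sym2_congr (congrArg inl (Fin.ext rfl)) (congrArg inl (Fin.ext hij.symm))
      have hmem : s(inl i, inl j) ∈ ((spFamily c hc (inr (inl ⟨(i : ℕ), hi⟩))).2.2).edges := by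
        rw [spFamily_edges_inr_inl, List.mem_singleton]
        exact hkey
      have h2 := H _ hmem
      rw [spFamily_edges_inr_inl, List.mem_singleton] at h2
      exact hne (hkey.trans h2.symm)
    · intro H
      have h0c : (⟨0, h0⟩ : Fin c) = ⟨0, hc⟩ := rfl
      have hmem : s(inl ⟨0, h0⟩, inr j) ∈ ((spFamily c hc (inr (inr j))).2.2).edges := by
        rw [spFamily_edges_inr_inr, List.mem_singleton, h0c]
      have h2 := H _ hmem
      rw [spFamily_edges_inr_inr, List.mem_singleton] at h2
      exact hne ((congrArg (fun x => s(inl x, inr j)) h0c).trans h2.symm)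
  · -- average length
    have hlen1 : ∀ j : Fin (c - 1), ((spFamily c hc (inl j)).2.2).length = c := by
      intro j
      show (spSpine c hc (c - 1) (Nat.sub_lt hc one_pos)).length + 1 = c
      rw [spSpine_length]
      omega
    have hlen2 : ∀ i : Fin (c - 1), ((spFamily c hc (inr (inl i))).2.2).length = 1 := fun i => rfl
    have hlen3 : ∀ j : Fin (c - 1), ((spFamily c hc (inr (inr j))).2.2).length = 1 := fun j => rfl
    rw [Fintype.sum_sum_type]
    simp only [hlen1]
    rw [Fintype.sum_sum_type]
    simp only [hlen2, hlen3, Finset.sum_const, Finset.card_univ, Fintype.card_fin,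
      smul_eq_mul, mul_one, Fintype.card_sum, Fintype.card_fin]
    obtain ⟨d, rfl⟩ : ∃ d, c = d + 1 := ⟨c - 1, by omega⟩
    simp only [Nat.add_sub_cancel]
    ring
end

section
/- Let G be a graph and S a family of paths in G in which an edge e is redundant, witnessed by an edge e' ≠ e such that every path of S containing e also contains e'. Let G' be obtained from G by contracting e, and let S' be the family obtained from S by contracting e in every path of S that contains e. Then a subfamily of S' is pairwise edge-disjoint in G' if and only if the corresponding subfamily of S is pairwise edge-disjoint in G. -/
/-- Contraction of a redundant edge preserves edge-disjointness.
Paths are represented by their sets of edges (`Ped i ⊆ E`); contracting the edge `e`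
turns the path with edge set `Ped i` into the path with edge set `Ped i \ {e}` (in the
contracted multigraph the remaining edges are kept, parallel edges staying distinct).
If `e` is redundant, witnessed by `e' ≠ e` such that every path containing `e` also
contains `e'`, then a subfamily `J` of the contracted paths is pairwise edge-disjoint
if and only if the corresponding subfamily of original paths is pairwise edge-disjoint. -/
theorem contract_redundant_edge_preserves_edge_disjointness
    {E ι : Type*} (Ped : ι → Set E) (e e' : E) (hne : e' ≠ e)
    (hred : ∀ i, e ∈ Ped i → e' ∈ Ped i) (J : Set ι) :
    (J.Pairwise fun i j => Disjoint (Ped i \ {e}) (Ped j \ {e})) ↔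
      (J.Pairwise fun i j => Disjoint (Ped i) (Ped j)) := by
  constructor
  · intro h i hi j hj hij
    have hd := h hi hj hij
    dsimp only at hd
    rw [Set.disjoint_left] at hd ⊢
    intro x hxi hxj
    by_cases hx : x = e
    · subst hx
      exact hd ⟨hred i hxi, hne⟩ ⟨hred j hxj, hne⟩
    · exact hd ⟨hxi, hx⟩ ⟨hxj, hx⟩
  · intro h i hi j hj hij
    exact (h hi hj hij).mono Set.diff_subset Set.diff_subset
end

section
/- Let H be a cubic graph and let G be the complete bipartite graph with one side {v1, v2, v3} and the other side V(H). Suppose H admits a proper 3-edge-coloring. Then there exists a family of pairwise edge-disjoint paths in G containing, for every edge {s,t} of H, a path from s to t. -/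
/-- A family of paths in `G = K_{3,|V(H)|}` (with parts `V(H)` and `{v1,v2,v3}`)
routing all edges of `H`: for each edge `{s,t}` of `H` there is a path of the family
from `s` to `t`, and the paths are pairwise edge-disjoint. -/
def RoutesAllEdges {W : Type*} (H : SimpleGraph W)
    (P : H.edgeSet → Σ u v : W ⊕ Fin 3, (completeBipartiteGraph W (Fin 3)).Walk u v) : Prop :=
  (∀ e, (P e).2.2.IsPath) ∧
  (∀ e : H.edgeSet, ∃ s t : W, (e : Sym2 W) = s(s, t) ∧
      (P e).1 = Sum.inl s ∧ (P e).2.1 = Sum.inl t) ∧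
  (∀ e₁ e₂ : H.edgeSet, e₁ ≠ e₂ → ∀ x ∈ (P e₁).2.2.edges, x ∉ (P e₂).2.2.edges)

/-- If the cubic graph `H` admits a proper 3-edge-coloring, then in the
complete bipartite graph with parts `{v1,v2,v3}` and `V(H)` there is a family of
pairwise edge-disjoint paths containing, for every edge `{s,t}` of `H`, a path from
`s` to `t`. -/
theorem edge_coloring_gives_routing
    {W : Type*} [Fintype W] [DecidableEq W] (H : SimpleGraph W) [DecidableRel H.Adj]
    (hcubic : ∀ v : W, H.degree v = 3)
    (hcol : ∃ φ : Sym2 W → Fin 3, ∀ e₁ ∈ H.edgeSet, ∀ e₂ ∈ H.edgeSet, e₁ ≠ e₂ →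
      (∃ v : W, v ∈ e₁ ∧ v ∈ e₂) → φ e₁ ≠ φ e₂) :
    ∃ P : H.edgeSet → Σ u v : W ⊕ Fin 3, (completeBipartiteGraph W (Fin 3)).Walk u v,
      RoutesAllEdges H P := by
  obtain ⟨φ, hφ⟩ := hcol
  have hout : ∀ e : H.edgeSet, (e : Sym2 W) = s((e : Sym2 W).out.1, (e : Sym2 W).out.2) := by
    intro e
    conv_lhs => rw [← (e : Sym2 W).out_eq]
  have hadj1 : ∀ (a : W) (c : Fin 3),
      (completeBipartiteGraph W (Fin 3)).Adj (Sum.inl a) (Sum.inr c) := by simp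
  have hadj2 : ∀ (a : W) (c : Fin 3),
      (completeBipartiteGraph W (Fin 3)).Adj (Sum.inr c) (Sum.inl a) := by simp
  refine ⟨fun e => ⟨Sum.inl (e : Sym2 W).out.1, Sum.inl (e : Sym2 W).out.2,
    SimpleGraph.Walk.cons (hadj1 _ (φ e)) (SimpleGraph.Walk.cons (hadj2 _ (φ e))
      SimpleGraph.Walk.nil)⟩, ?_, ?_, ?_⟩
  · intro e
    have hne : (e : Sym2 W).out.1 ≠ (e : Sym2 W).out.2 := by
      have he : (e : Sym2 W) ∈ H.edgeSet := e.2
      rw [hout e] at he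
      exact (H.mem_edgeSet.mp he).ne
    simp [SimpleGraph.Walk.isPath_def, hne]
  · intro e
    exact ⟨_, _, hout e, rfl, rfl⟩
  · intro e₁ e₂ hne x hx1 hx2
    have main : ∀ v₁ v₂ : W, v₁ ∈ (e₁ : Sym2 W) → v₂ ∈ (e₂ : Sym2 W) → v₂ = v₁ →
        φ e₁ = φ e₂ → False := by
      intro v₁ v₂ m1 m2 hv hc
      exact hφ e₁ e₁.2 e₂ e₂.2 (Subtype.coe_injective.ne hne) ⟨v₁, m1, hv ▸ m2⟩ hc
    simp only [SimpleGraph.Walk.edges_cons, SimpleGraph.Walk.edges_nil, List.mem_cons,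
      List.not_mem_nil, or_false] at hx1 hx2
    rcases hx1 with h1 | h1 <;> rcases hx2 with h2 | h2 <;>
      rw [h2] at h1 <;> rw [Sym2.eq_iff] at h1 <;>
      rcases h1 with ⟨ha, hb⟩ | ⟨ha, hb⟩ <;>
      first
        | exact absurd ha Sum.inl_ne_inr | exact absurd ha Sum.inr_ne_inl
        | exact absurd hb Sum.inl_ne_inr | exact absurd hb Sum.inr_ne_inl
        | exact main _ _ (Sym2.out_fst_mem _) (Sym2.out_fst_mem _)
            (Sum.inl_injective ha) (Sum.inr_injective hb).symm
        | exact main _ _ (Sym2.out_fst_mem _) (Sym2.out_snd_mem _)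
            (Sum.inl_injective ha) (Sum.inr_injective hb).symm
        | exact main _ _ (Sym2.out_snd_mem _) (Sym2.out_fst_mem _)
            (Sum.inl_injective ha) (Sum.inr_injective hb).symm
        | exact main _ _ (Sym2.out_snd_mem _) (Sym2.out_snd_mem _)
            (Sum.inl_injective ha) (Sum.inr_injective hb).symm
        | exact main _ _ (Sym2.out_fst_mem _) (Sym2.out_fst_mem _)
            (Sum.inl_injective hb) (Sum.inr_injective ha).symm
        | exact main _ _ (Sym2.out_fst_mem _) (Sym2.out_snd_mem _)
            (Sum.inl_injective hb) (Sum.inr_injective ha).symm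
        | exact main _ _ (Sym2.out_snd_mem _) (Sym2.out_fst_mem _)
            (Sum.inl_injective hb) (Sum.inr_injective ha).symm
        | exact main _ _ (Sym2.out_snd_mem _) (Sym2.out_snd_mem _)
            (Sum.inl_injective hb) (Sum.inr_injective ha).symm
end

section
/- Let H be a cubic graph and let G be the complete bipartite graph with one side {v1, v2, v3} and the other side V(H). Suppose there exists a family of pairwise edge-disjoint paths in G containing, for every edge {s,t} of H, a path from s to t. Then every path in this family has length exactly 2 (i.e., is of the form s–v_c–t for some c ∈ {1,2,3}). -/
open SimpleGraph

-- first edge of a nonnil walk starting at inl s is incident to inl s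
lemma first_edge_aux {W : Type*} {s : W} {x : W ⊕ Fin 3}
    (w : (completeBipartiteGraph W (Fin 3)).Walk (Sum.inl s) x)
    (hne : ¬ w.Nil) : ∃ c : Fin 3, s(Sum.inl s, Sum.inr c) ∈ w.edges := by
  cases w with
  | nil => simp at hne
  | cons h p =>
    rename_i y
    rcases h with ⟨-, hy⟩ | ⟨hy, -⟩
    · obtain ⟨c, rfl⟩ := Sum.isRight_iff.mp hy
      exact ⟨c, List.mem_cons_self ..⟩
    · simp at hy

/-- If `H` is cubic and, in the complete bipartite graph `G` with parts
`{v1,v2,v3}` and `V(H)`, a family of pairwise edge-disjoint paths routes every edge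
`{s,t}` of `H` (one `s`-`t` path per edge), then every path in the family has length
exactly 2. -/
theorem routing_paths_have_length_two
    {W : Type*} [Fintype W] [DecidableEq W] (H : SimpleGraph W) [DecidableRel H.Adj]
    (hcubic : ∀ v : W, H.degree v = 3)
    (P : H.edgeSet → Σ u v : W ⊕ Fin 3, (completeBipartiteGraph W (Fin 3)).Walk u v)
    (hpath : ∀ e, (P e).2.2.IsPath)
    (hconn : ∀ e : H.edgeSet, ∃ s t : W, (e : Sym2 W) = s(s, t) ∧
      (P e).1 = Sum.inl s ∧ (P e).2.1 = Sum.inl t)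
    (hdisj : ∀ e₁ e₂ : H.edgeSet, e₁ ≠ e₂ → ∀ x ∈ (P e₁).2.2.edges, x ∉ (P e₂).2.2.edges) :
    ∀ e : H.edgeSet, (P e).2.2.length = 2 := by
  classical
  -- every path for an edge containing u has an edge incident to inl u
  have key : ∀ (u : W) (e' : H.edgeSet), u ∈ (e' : Sym2 W) →
      ∃ c : Fin 3, s(Sum.inl u, Sum.inr c) ∈ (P e').2.2.edges := by
    intro u e' hu
    obtain ⟨a, b, hab, h1, h2⟩ := hconn e'
    have hne : a ≠ b := by
      have : H.Adj a b := by
        have := e'.2; rw [hab] at this; exact this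
      exact this.ne
    have hu' : u = a ∨ u = b := by
      rw [hab, Sym2.mem_iff] at hu; exact hu
    set w := (P e').2.2.copy h1 h2 with hw
    have hedges : w.edges = (P e').2.2.edges := Walk.edges_copy _ _ _
    have hwnil : ¬ w.Nil := by
      intro hnil
      exact hne (by simpa using Walk.eq_of_length_eq_zero (Walk.nil_iff_length_eq.mp hnil))
    rcases hu' with rfl | rfl
    · obtain ⟨c, hc⟩ := first_edge_aux w hwnil
      exact ⟨c, by rwa [hedges] at hc⟩
    · have hwnil' : ¬ w.reverse.Nil := by
        rw [Walk.nil_iff_length_eq] at hwnil ⊢; simpa using hwnil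
      obtain ⟨c, hc⟩ := first_edge_aux w.reverse hwnil'
      rw [Walk.edges_reverse, List.mem_reverse, hedges] at hc
      exact ⟨c, hc⟩
  -- surjectivity: every G-edge at inl u is used by some path of an H-edge at u
  have surj : ∀ (u : W) (c : Fin 3), ∃ e' : H.edgeSet, u ∈ (e' : Sym2 W) ∧
      s(Sum.inl u, Sum.inr c) ∈ (P e').2.2.edges := by
    intro u c
    set f : {e' : H.edgeSet // u ∈ (e' : Sym2 W)} → Fin 3 :=
      fun e' => (key u e'.1 e'.2).choose with hf
    have hfspec : ∀ e', s(Sum.inl u, Sum.inr (f e')) ∈ (P e'.1).2.2.edges :=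
      fun e' => (key u e'.1 e'.2).choose_spec
    have hinj : Function.Injective f := by
      intro a b hab
      by_contra hne
      have hne' : a.1 ≠ b.1 := fun h => hne (Subtype.ext h)
      exact hdisj a.1 b.1 hne' _ (hfspec a) (hab ▸ hfspec b)
    have hcard : Fintype.card {e' : H.edgeSet // u ∈ (e' : Sym2 W)} = 3 := by
      have e1 : {e' : H.edgeSet // u ∈ (e' : Sym2 W)} ≃ (H.incidenceSet u) :=
        (Equiv.subtypeSubtypeEquivSubtypeInter (· ∈ H.edgeSet) (u ∈ ·)).trans
          (Equiv.setCongr rfl)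
      rw [Fintype.card_congr e1, H.card_incidenceSet_eq_degree, hcubic u]
    have hbij : Function.Bijective f :=
      (Fintype.bijective_iff_injective_and_card f).mpr ⟨hinj, by simp [hcard]⟩
    obtain ⟨e', he'⟩ := hbij.2 c
    exact ⟨e'.1, e'.2, he' ▸ hfspec e'⟩
  intro e
  obtain ⟨s, t, hab, h1, h2⟩ := hconn e
  have hst : s ≠ t := by
    have : H.Adj s t := by have := e.2; rw [hab] at this; exact this
    exact this.ne
  obtain ⟨w, hedges, hlen, hp⟩ :
      ∃ w : (completeBipartiteGraph W (Fin 3)).Walk (Sum.inl s) (Sum.inl t),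
        w.edges = (P e).2.2.edges ∧ w.length = (P e).2.2.length ∧ w.IsPath :=
    ⟨(P e).2.2.copy h1 h2, Walk.edges_copy _ _ _, Walk.length_copy _ _ _,
      (Walk.isPath_copy _ _ _).mpr (hpath e)⟩
  rw [← hlen]
  -- case analysis on the walk
  cases w with
  | nil => exact absurd rfl hst
  | cons h p =>
    rename_i y
    have hy : ∃ c, y = Sum.inr c := by
      rcases h with ⟨-, hy⟩ | ⟨hy, -⟩
      · exact Sum.isRight_iff.mp hy
      · simp at hy
    obtain ⟨c, rfl⟩ := hy
    cases p with
    | cons h' p' =>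
      rename_i z
      have hz : ∃ u, z = Sum.inl u := by
        rcases h' with ⟨hz, -⟩ | ⟨-, hz⟩
        · simp at hz
        · exact Sum.isLeft_iff.mp hz
      obtain ⟨u, rfl⟩ := hz
      cases p' with
      | nil => simp
      | cons h'' p'' =>
        exfalso
        -- u is internal: u ≠ s, u ≠ t
        have hsup := hp.support_nodup
        simp only [Walk.support_cons, List.nodup_cons] at hsup
        have hus : u ≠ s := by
          rintro rfl
          exact hsup.1 (by simp)
        have hut : u ≠ t := by
          rintro rfl
          exact hsup.2.2.1 (by
            simpa using Walk.end_mem_support (Walk.cons h'' p''))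
        have hmem : s(Sum.inl u, Sum.inr c) ∈ (P e).2.2.edges := by
          rw [← hedges]
          simp [Sym2.eq_swap]
        obtain ⟨e', hue', hce'⟩ := surj u c
        have hne : e ≠ e' := by
          rintro rfl
          rw [hab, Sym2.mem_iff] at hue'
          rcases hue' with rfl | rfl <;> [exact hus rfl; exact hut rfl]
        exact hdisj e e' hne _ hmem hce'
end

section
/- Let H be a cubic graph and let G be the complete bipartite graph with one side {v1, v2, v3} and the other side V(H). Then H admits a proper 3-edge-coloring if and only if there exists a family of pairwise edge-disjoint paths in G containing, for each edge {s,t} ∈ E(H), a path connecting s and t. -/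
open SimpleGraph Sum

set_option linter.unusedSectionVars false

section Aux
variable {W : Type*} [Fintype W] [DecidableEq W]

local notation "G" => completeBipartiteGraph W (Fin 3)

instance : DecidableRel (completeBipartiteGraph W (Fin 3)).Adj := fun v w =>
  decidable_of_iff _ (Iff.of_eq (completeBipartiteGraph_adj W (Fin 3) v w).symm)

lemma cb_two_le_length {u v : W ⊕ Fin 3} (q : (completeBipartiteGraph W (Fin 3)).Walk u v)
    {s t : W} (hu : u = inl s) (hv : v = inl t) (hst : s ≠ t) : 2 ≤ q.length := by
  cases q with
  | nil => exact absurd (hu ▸ hv : inl s = inl t) (by simp [hst])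
  | cons h q' =>
    cases q' with
    | nil => subst hu hv; simp at h
    | cons h2 q'' => simp only [SimpleGraph.Walk.length_cons]; omega

lemma cb_walk_two {u v : W ⊕ Fin 3} (q : (completeBipartiteGraph W (Fin 3)).Walk u v)
    (hq : q.length = 2) {s t : W} (hu : u = inl s) (hv : v = inl t) :
    ∃ c : Fin 3, s(inl s, inr c) ∈ q.edges ∧ s(inr c, inl t) ∈ q.edges := by
  cases q with
  | nil => simp at hq
  | cons h q' =>
    cases q' with
    | nil => simp at hq
    | cons h2 q'' =>
      cases q'' with
      | cons h3 q''' => simp [SimpleGraph.Walk.length_cons] at hq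
      | nil =>
        rename_i m
        subst hu hv
        rcases m with m | c
        · simp at h
        · exact ⟨c, by simp, by simp⟩

lemma cb_card_edgeFinset :
    2 * ((completeBipartiteGraph W (Fin 3)).edgeFinset.card) = 2 * (3 * Fintype.card W) := by
  rw [← SimpleGraph.sum_degrees_eq_twice_card_edges, Fintype.sum_sum_type]
  have h1 : ∀ w : W, (completeBipartiteGraph W (Fin 3)).degree (inl w) = 3 := by
    intro w
    rw [← SimpleGraph.card_neighborFinset_eq_degree]
    have : (completeBipartiteGraph W (Fin 3)).neighborFinset (inl w)
        = Finset.univ.map ⟨inr, inr_injective⟩ := by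
      ext x; rcases x with x | c <;> simp
    rw [this]; simp
  have h2 : ∀ c : Fin 3, (completeBipartiteGraph W (Fin 3)).degree (inr c) = Fintype.card W := by
    intro c
    rw [← SimpleGraph.card_neighborFinset_eq_degree]
    have : (completeBipartiteGraph W (Fin 3)).neighborFinset (inr c)
        = Finset.univ.map ⟨inl, inl_injective⟩ := by
      ext x; rcases x with x | c' <;> simp
    rw [this]; simp
  simp [h1, h2]
  ring

end Aux

/-- A cubic graph `H` admits a proper 3-edge-coloring if and only if, in
the complete bipartite graph with parts `{v1,v2,v3}` and `V(H)`, there is a family of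
pairwise edge-disjoint paths containing, for each edge `{s,t}` of `H`, a path
connecting `s` and `t`. -/
theorem edge_coloring_iff_routing
    {W : Type*} [Fintype W] [DecidableEq W] (H : SimpleGraph W) [DecidableRel H.Adj]
    (hcubic : ∀ v : W, H.degree v = 3) :
    (∃ φ : Sym2 W → Fin 3, ∀ e₁ ∈ H.edgeSet, ∀ e₂ ∈ H.edgeSet, e₁ ≠ e₂ →
        (∃ v : W, v ∈ e₁ ∧ v ∈ e₂) → φ e₁ ≠ φ e₂) ↔
    (∃ P : H.edgeSet → Σ u v : W ⊕ Fin 3, (completeBipartiteGraph W (Fin 3)).Walk u v,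
      (∀ e, (P e).2.2.IsPath) ∧
      (∀ e : H.edgeSet, ∃ s t : W, (e : Sym2 W) = s(s, t) ∧
        (P e).1 = Sum.inl s ∧ (P e).2.1 = Sum.inl t) ∧
      (∀ e₁ e₂ : H.edgeSet, e₁ ≠ e₂ → ∀ x ∈ (P e₁).2.2.edges, x ∉ (P e₂).2.2.edges)) := by
  constructor
  · rintro ⟨φ, hφ⟩
    have hrep : ∀ e : H.edgeSet, ∃ s t : W, (e : Sym2 W) = s(s, t) := by
      rintro ⟨e, he⟩
      induction e using Sym2.ind with
      | _ s t => exact ⟨s, t, rfl⟩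
    choose s t hst using hrep
    have hadj : ∀ e : H.edgeSet, H.Adj (s e) (t e) := by
      intro e
      have := e.2
      rwa [show (e : Sym2 W) = s(s e, t e) from hst e, SimpleGraph.mem_edgeSet] at this
    refine ⟨fun e => ⟨inl (s e), inl (t e),
      SimpleGraph.Walk.cons (v := inr (φ (e : Sym2 W))) (by simp) (SimpleGraph.Walk.cons (by simp)
        SimpleGraph.Walk.nil)⟩, ?_, ?_, ?_⟩
    · intro e
      have : s e ≠ t e := (hadj e).ne
      simp [SimpleGraph.Walk.isPath_def, this]
    · exact fun e => ⟨s e, t e, hst e, rfl, rfl⟩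
    · intro e₁ e₂ hne x hx1 hx2
      have hneS : (e₁ : Sym2 W) ≠ (e₂ : Sym2 W) := fun h => hne (Subtype.ext h)
      simp only [SimpleGraph.Walk.edges_cons, SimpleGraph.Walk.edges_nil,
        List.mem_cons, List.not_mem_nil, or_false] at hx1 hx2
      have form : ∀ (e : H.edgeSet) (x : Sym2 (W ⊕ Fin 3)),
          (x = s(inl (s e), inr (φ (e : Sym2 W))) ∨ x = s(inr (φ (e : Sym2 W)), inl (t e))) →
          ∃ a : W, a ∈ (e : Sym2 W) ∧ x = s(inl a, inr (φ (e : Sym2 W))) := by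
        rintro e x (rfl | rfl)
        · exact ⟨s e, by rw [hst e]; simp, rfl⟩
        · exact ⟨t e, by rw [hst e]; simp, Sym2.eq_swap⟩
      obtain ⟨a₁, ha₁, rfl⟩ := form e₁ x hx1
      obtain ⟨a₂, ha₂, heq⟩ := form e₂ _ hx2
      rw [Sym2.eq_iff] at heq
      simp only [inl.injEq, inr.injEq, reduceCtorEq, false_and, and_false, or_false,
        false_or] at heq
      exact hφ e₁ e₁.2 e₂ e₂.2 hneS ⟨a₁, ha₁, by rw [heq.1]; exact ha₂⟩ heq.2
  · rintro ⟨P, hpath, hends, hdisj⟩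
    choose s t hst hu hv using hends
    have hadj : ∀ e : H.edgeSet, H.Adj (s e) (t e) := by
      intro e
      have := e.2
      rwa [show (e : Sym2 W) = s(s e, t e) from hst e, SimpleGraph.mem_edgeSet] at this
    -- counting: every path has length 2
    classical
    set F : H.edgeSet → Finset (Sym2 (W ⊕ Fin 3)) := fun e => (P e).2.2.edges.toFinset with hF
    have hcard : ∀ e, (F e).card = (P e).2.2.length := fun e => by
      rw [hF, List.toFinset_card_of_nodup (hpath e).edges_nodup,
        SimpleGraph.Walk.length_edges]
    have hdisjF : ∀ e₁ ∈ (Finset.univ : Finset H.edgeSet), ∀ e₂ ∈ Finset.univ, e₁ ≠ e₂ →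
        Disjoint (F e₁) (F e₂) := by
      intro e₁ _ e₂ _ hne
      rw [Finset.disjoint_left]
      intro x hx1 hx2
      rw [hF, List.mem_toFinset] at hx1 hx2
      exact hdisj e₁ e₂ hne x hx1 hx2
    have hsub : Finset.univ.biUnion F ⊆ (completeBipartiteGraph W (Fin 3)).edgeFinset := by
      intro x hx
      rw [Finset.mem_biUnion] at hx
      obtain ⟨e, _, hx⟩ := hx
      rw [hF, List.mem_toFinset] at hx
      rw [SimpleGraph.mem_edgeFinset]
      exact (P e).2.2.edges_subset_edgeSet hx
    have hsum_le : ∑ e : H.edgeSet, (P e).2.2.length ≤ 3 * Fintype.card W := by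
      have h1 : ∑ e : H.edgeSet, (P e).2.2.length = (Finset.univ.biUnion F).card := by
        rw [Finset.card_biUnion hdisjF]
        exact Finset.sum_congr rfl fun e _ => (hcard e).symm
      have h2 : (Finset.univ.biUnion F).card ≤ ((completeBipartiteGraph W (Fin 3)).edgeFinset.card) :=
        Finset.card_le_card hsub
      have h3 := cb_card_edgeFinset (W := W)
      omega
    have hlb : ∀ e : H.edgeSet, 2 ≤ (P e).2.2.length := fun e =>
      cb_two_le_length (P e).2.2 (hu e) (hv e) (hadj e).ne
    have hEH : 2 * H.edgeFinset.card = 3 * Fintype.card W := by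
      rw [← SimpleGraph.sum_degrees_eq_twice_card_edges]
      simp [hcubic, mul_comm]
    have hsum2 : ∑ _e : H.edgeSet, 2 = 3 * Fintype.card W := by
      rw [Finset.sum_const, Finset.card_univ, smul_eq_mul, ← SimpleGraph.edgeFinset_card]
      omega
    have hlen : ∀ e : H.edgeSet, (P e).2.2.length = 2 := by
      have hle : ∑ _e : H.edgeSet, 2 ≤ ∑ e : H.edgeSet, (P e).2.2.length :=
        Finset.sum_le_sum fun e _ => hlb e
      have heq : ∑ _e : H.edgeSet, (2:ℕ) = ∑ e : H.edgeSet, (P e).2.2.length := le_antisymm hle (by omega)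
      intro e
      exact ((Finset.sum_eq_sum_iff_of_le fun i _ => hlb i).mp heq e (Finset.mem_univ e)).symm
    have hmid : ∀ e : H.edgeSet, ∃ c : Fin 3,
        s(inl (s e), inr c) ∈ (P e).2.2.edges ∧ s(inr c, inl (t e)) ∈ (P e).2.2.edges := by
      intro e
      exact cb_walk_two (P e).2.2 (hlen e) (hu e) (hv e)
    choose c hc1 hc2 using hmid
    refine ⟨fun x => if h : x ∈ H.edgeSet then c ⟨x, h⟩ else 0, ?_⟩
    intro e₁ h₁ e₂ h₂ hne hshare
    simp only [dif_pos h₁, dif_pos h₂]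
    intro hcc
    obtain ⟨v, hv1, hv2⟩ := hshare
    set E₁ : H.edgeSet := ⟨e₁, h₁⟩
    set E₂ : H.edgeSet := ⟨e₂, h₂⟩
    have hneE : E₁ ≠ E₂ := fun h => hne (congrArg Subtype.val h)
    have hmem : ∀ (E : H.edgeSet), v ∈ (E : Sym2 W) →
        s(inl v, inr (c E)) ∈ (P E).2.2.edges := by
      intro E hvE
      rw [hst E, Sym2.mem_iff] at hvE
      rcases hvE with rfl | rfl
      · exact hc1 E
      · rw [Sym2.eq_swap]; exact hc2 E
    exact hdisj E₁ E₂ hneE _ (hmem E₁ hv1) (hcc ▸ hmem E₂ hv2)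
end

section
/- Let H be a cubic graph on n vertices and let G be the complete bipartite graph with parts {v1, v2} and V(H). Then H admits a proper 3-edge-coloring if and only if there exists a family of n pairwise edge-disjoint paths in G, each connecting the endpoints of a distinct edge of H. -/
open Finset Sum

instance instDecAdjCB (W : Type*) : DecidableRel (completeBipartiteGraph W (Fin 2)).Adj := by
  intro a b; cases a <;> cases b <;> simp [completeBipartiteGraph] <;> infer_instance

lemma doublecount {W : Type*} [Fintype W] [DecidableEq W] (A : Finset (Sym2 W))
    (h : ∀ e ∈ A, ¬ e.IsDiag) :
    ∑ v : W, ({e ∈ A | v ∈ e}).card = 2 * A.card := by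
  have h1 : ∀ v : W, ({e ∈ A | v ∈ e}).card = ∑ e ∈ A, if v ∈ e then 1 else 0 := by
    intro v; rw [Finset.card_filter]
  simp_rw [h1]
  rw [Finset.sum_comm]
  rw [Finset.sum_congr rfl (fun e he => ?_), Finset.sum_const, smul_eq_mul, mul_comm]
  induction e with
  | _ a b =>
    have hab : a ≠ b := by simpa using h _ he
    rw [← Finset.card_filter]
    have h2 : ({v ∈ (univ : Finset W) | v ∈ s(a,b)}) = {a, b} := by
      ext v; simp [Sym2.mem_iff]
    rw [h2, Finset.card_insert_of_notMem (by simpa using hab), Finset.card_singleton]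

lemma incid_card {W : Type*} [Fintype W] [DecidableEq W] (H : SimpleGraph W)
    [DecidableRel H.Adj] (v : W) :
    ({e ∈ H.edgeFinset | v ∈ e}).card = H.degree v := by
  rw [← SimpleGraph.incidenceFinset_eq_filter, SimpleGraph.card_incidenceFinset_eq_degree]

lemma edge_card_le {W : Type*} [Fintype W] [DecidableEq W] :
    (completeBipartiteGraph W (Fin 2)).edgeFinset.card ≤ 2 * Fintype.card W := by
  classical
  have hsub : (completeBipartiteGraph W (Fin 2)).edgeFinset ⊆
      (Finset.univ : Finset (W × Fin 2)).image (fun p => s(inl p.1, inr p.2)) := by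
    intro e he
    rw [SimpleGraph.mem_edgeFinset] at he
    induction e with
    | _ a b =>
      simp only [SimpleGraph.mem_edgeSet, completeBipartiteGraph_adj] at he
      rcases he with ⟨ha, hb⟩ | ⟨ha, hb⟩
      · obtain ⟨w, rfl⟩ := Sum.isLeft_iff.mp ha
        obtain ⟨i, rfl⟩ := Sum.isRight_iff.mp hb
        exact Finset.mem_image.mpr ⟨(w, i), Finset.mem_univ _, rfl⟩
      · obtain ⟨i, rfl⟩ := Sum.isRight_iff.mp ha
        obtain ⟨w, rfl⟩ := Sum.isLeft_iff.mp hb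
        exact Finset.mem_image.mpr ⟨(w, i), Finset.mem_univ _, Sym2.eq_swap⟩
  calc (completeBipartiteGraph W (Fin 2)).edgeFinset.card
      ≤ _ := Finset.card_le_card hsub
    _ ≤ (Finset.univ : Finset (W × Fin 2)).card := Finset.card_image_le
    _ = 2 * Fintype.card W := by simp [Fintype.card_prod, mul_comm]

lemma walk_len_two {W : Type*} {s t : W}
    (w : (completeBipartiteGraph W (Fin 2)).Walk (inl s) (inl t)) (h : w.length = 2) :
    ∃ i : Fin 2, w.edges = [s(inl s, inr i), s(inr i, inl t)] := by
  cases w with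
  | nil => simp at h
  | @cons _ c _ h1 w' =>
    cases w' with
    | nil => simp at h
    | @cons _ d _ h2 w'' =>
      cases w'' with
      | nil =>
        rcases c with a | i
        · simp [completeBipartiteGraph] at h1
        · exact ⟨i, by simp⟩
      | cons h3 w''' => simp [SimpleGraph.Walk.length_cons] at h

lemma walk_len_ge {W : Type*} {s t : W} (hst : s ≠ t)
    (w : (completeBipartiteGraph W (Fin 2)).Walk (inl s) (inl t)) : 2 ≤ w.length := by
  cases w with
  | nil => exact absurd rfl hst
  | cons h1 w' =>
    cases w' with
    | nil => simp [completeBipartiteGraph] at h1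
    | cons h2 w'' => simp [SimpleGraph.Walk.length_cons]

lemma bwd {W : Type*} [Fintype W] [DecidableEq W] (H : SimpleGraph W) [DecidableRel H.Adj]
    (hcubic : ∀ v : W, H.degree v = 3)
    (S : Finset H.edgeSet)
    (P : H.edgeSet → Σ u v : W ⊕ Fin 2, (completeBipartiteGraph W (Fin 2)).Walk u v)
    (hScard : S.card = Fintype.card W)
    (hpath : ∀ e ∈ S, (P e).2.2.IsPath)
    (hends : ∀ e ∈ S, ∃ s t : W, (e : Sym2 W) = s(s, t) ∧
        (P e).1 = Sum.inl s ∧ (P e).2.1 = Sum.inl t)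
    (hdisj : ∀ e₁ ∈ S, ∀ e₂ ∈ S, e₁ ≠ e₂ → ∀ x ∈ (P e₁).2.2.edges, x ∉ (P e₂).2.2.edges) :
    (∃ φ : Sym2 W → Fin 3, ∀ e₁ ∈ H.edgeSet, ∀ e₂ ∈ H.edgeSet, e₁ ≠ e₂ →
        (∃ v : W, v ∈ e₁ ∧ v ∈ e₂) → φ e₁ ≠ φ e₂) := by
  classical
  -- each walk has length ≥ 2
  have hge : ∀ e ∈ S, 2 ≤ (P e).2.2.length := by
    intro e he
    obtain ⟨s, t, hst, hs, ht⟩ := hends e he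
    have hadj : H.Adj s t := by
      have := e.prop; rw [hst, SimpleGraph.mem_edgeSet] at this; exact this
    have := walk_len_ge hadj.ne ((P e).2.2.copy hs ht)
    rwa [SimpleGraph.Walk.length_copy] at this
  -- total edge count bound
  have hsum : ∑ e ∈ S, (P e).2.2.length ≤ 2 * Fintype.card W := by
    have hbc : (S.biUnion (fun e => (P e).2.2.edges.toFinset)).card
        = ∑ e ∈ S, (P e).2.2.edges.toFinset.card := by
      apply Finset.card_biUnion
      intro e₁ h₁ e₂ h₂ hne
      rw [Function.onFun, Finset.disjoint_left]
      intro x hx1 hx2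
      rw [List.mem_toFinset] at hx1 hx2
      exact hdisj e₁ h₁ e₂ h₂ hne x hx1 hx2
    have hsubF : S.biUnion (fun e => (P e).2.2.edges.toFinset)
        ⊆ (completeBipartiteGraph W (Fin 2)).edgeFinset := by
      intro x hx
      obtain ⟨e, he, hxe⟩ := Finset.mem_biUnion.mp hx
      rw [List.mem_toFinset] at hxe
      exact SimpleGraph.mem_edgeFinset.mpr ((P e).2.2.edges_subset_edgeSet hxe)
    have heq : ∀ e ∈ S, (P e).2.2.edges.toFinset.card = (P e).2.2.length := by
      intro e he
      rw [List.toFinset_card_of_nodup (hpath e he).edges_nodup,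
        SimpleGraph.Walk.length_edges]
    calc ∑ e ∈ S, (P e).2.2.length = ∑ e ∈ S, (P e).2.2.edges.toFinset.card :=
          (Finset.sum_congr rfl heq).symm
      _ = _ := hbc.symm
      _ ≤ (completeBipartiteGraph W (Fin 2)).edgeFinset.card :=
          Finset.card_le_card hsubF
      _ ≤ 2 * Fintype.card W := edge_card_le
  -- each walk has length exactly 2
  have hlen : ∀ e ∈ S, (P e).2.2.length = 2 := by
    have h2 : ∑ e ∈ S, (2 : ℕ) = 2 * Fintype.card W := by
      rw [Finset.sum_const, smul_eq_mul, hScard, mul_comm]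
    have h3 : ∑ e ∈ S, (2 : ℕ) ≤ ∑ e ∈ S, (P e).2.2.length := Finset.sum_le_sum hge
    have := (Finset.sum_eq_sum_iff_of_le hge).mp (by omega)
    intro e he; exact (this e he).symm
  -- structure of each walk
  have hmid : ∀ e ∈ S, ∃ (i : Fin 2) (s t : W), (e : Sym2 W) = s(s, t) ∧
      (P e).2.2.edges = [s(inl s, inr i), s(inr i, inl t)] := by
    intro e he
    obtain ⟨s, t, hst, hs, ht⟩ := hends e he
    obtain ⟨i, hi⟩ := walk_len_two ((P e).2.2.copy hs ht)
      (by rw [SimpleGraph.Walk.length_copy]; exact hlen e he)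
    rw [SimpleGraph.Walk.edges_copy] at hi
    exact ⟨i, s, t, hst, hi⟩
  set m : H.edgeSet → Fin 2 := fun e => if he : e ∈ S then (hmid e he).choose else 0 with hm
  have hmspec : ∀ e (he : e ∈ S), ∃ s t : W, (e : Sym2 W) = s(s, t) ∧
      (P e).2.2.edges = [s(inl s, inr (m e)), s(inr (m e), inl t)] := by
    intro e he
    have := (hmid e he).choose_spec
    simpa [hm, dif_pos he] using this
  -- every endpoint edge is in the walk
  have hedge : ∀ e (he : e ∈ S), ∀ v ∈ (e : Sym2 W),
      s(inl v, inr (m e)) ∈ (P e).2.2.edges := by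
    intro e he v hv
    obtain ⟨s, t, hst, hedges⟩ := hmspec e he
    rw [hst, Sym2.mem_iff] at hv
    rw [hedges]
    rcases hv with rfl | rfl
    · exact List.mem_cons_self
    · rw [show s(inr (m e), inl v) = s(inl v, inr (m e)) from Sym2.eq_swap] at *
      simp
  -- injectivity: same vertex & index implies same edge
  have hinj : ∀ e₁ ∈ S, ∀ e₂ ∈ S, ∀ v : W, v ∈ (e₁ : Sym2 W) → v ∈ (e₂ : Sym2 W) →
      m e₁ = m e₂ → e₁ = e₂ := by
    intro e₁ h₁ e₂ h₂ v hv1 hv2 hmm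
    by_contra hne
    exact hdisj e₁ h₁ e₂ h₂ hne _ (hedge e₁ h₁ v hv1) (hmm ▸ hedge e₂ h₂ v hv2)
  -- the set of routed edges
  set A : Finset (Sym2 W) := S.image Subtype.val with hA
  have hAcard : A.card = Fintype.card W := by
    rw [hA, Finset.card_image_of_injective _ Subtype.val_injective, hScard]
  have hmemA : ∀ x, x ∈ A ↔ ∃ hx : x ∈ H.edgeSet, (⟨x, hx⟩ : H.edgeSet) ∈ S := by
    intro x
    rw [hA, Finset.mem_image]
    constructor
    · rintro ⟨e, he, rfl⟩; exact ⟨e.prop, by simpa using he⟩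
    · rintro ⟨hx, hmem⟩; exact ⟨⟨x, hx⟩, hmem, rfl⟩
  have hdiag : ∀ x ∈ A, ¬ x.IsDiag := by
    intro x hx
    obtain ⟨hx', _⟩ := (hmemA x).mp hx
    exact SimpleGraph.not_isDiag_of_mem_edgeSet _ hx'
  -- per-vertex routed count
  have hperle : ∀ v : W, ({e ∈ A | v ∈ e}).card ≤ 2 := by
    intro v
    have : ({e ∈ A | v ∈ e}).card ≤ (Finset.univ : Finset (Fin 2)).card := by
      apply Finset.card_le_card_of_injOn
        (fun x => if hx : x ∈ H.edgeSet then m ⟨x, hx⟩ else 0)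
      · intro x hx; exact Finset.mem_univ _
      · intro x₁ hx₁ x₂ hx₂ heq
        simp only [Finset.coe_filter, Set.mem_setOf_eq] at hx₁ hx₂
        obtain ⟨hx₁', hS₁⟩ := (hmemA _).mp hx₁.1
        obtain ⟨hx₂', hS₂⟩ := (hmemA _).mp hx₂.1
        simp only [dif_pos hx₁', dif_pos hx₂'] at heq
        have := hinj _ hS₁ _ hS₂ v hx₁.2 hx₂.2 heq
        exact congrArg Subtype.val this
    simpa using this
  have hper : ∀ v : W, ({e ∈ A | v ∈ e}).card = 2 := by
    have hdc := doublecount A hdiag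
    rw [hAcard] at hdc
    have h2 : ∑ _v : W, (2 : ℕ) = 2 * Fintype.card W := by
      rw [Finset.sum_const, smul_eq_mul, Finset.card_univ, mul_comm]
    intro v
    exact (Finset.sum_eq_sum_iff_of_le (fun v _ => hperle v)).mp (by omega) v
      (Finset.mem_univ v)
  -- at most one unrouted edge per vertex
  have huniq : ∀ v : W, ∀ x₁ x₂ : Sym2 W, x₁ ∈ H.edgeSet → x₂ ∈ H.edgeSet →
      v ∈ x₁ → v ∈ x₂ → x₁ ∉ A → x₂ ∉ A → x₁ = x₂ := by
    intro v x₁ x₂ hx₁ hx₂ hv₁ hv₂ hA₁ hA₂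
    set I := {e ∈ H.edgeFinset | v ∈ e} with hI
    have hI3 : I.card = 3 := by rw [hI, incid_card]; exact hcubic v
    have hsub : {e ∈ A | v ∈ e} ⊆ I := by
      intro x hx
      rw [Finset.mem_filter] at hx ⊢
      obtain ⟨hx', _⟩ := (hmemA x).mp hx.1
      exact ⟨SimpleGraph.mem_edgeFinset.mpr hx', hx.2⟩
    have hcd : (I \ {e ∈ A | v ∈ e}).card = 1 := by
      rw [Finset.card_sdiff_of_subset hsub, hI3, hper v]
    have hm₁ : x₁ ∈ I \ {e ∈ A | v ∈ e} := by
      rw [Finset.mem_sdiff, hI, Finset.mem_filter, Finset.mem_filter]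
      exact ⟨⟨SimpleGraph.mem_edgeFinset.mpr hx₁, hv₁⟩, fun h => hA₁ h.1⟩
    have hm₂ : x₂ ∈ I \ {e ∈ A | v ∈ e} := by
      rw [Finset.mem_sdiff, hI, Finset.mem_filter, Finset.mem_filter]
      exact ⟨⟨SimpleGraph.mem_edgeFinset.mpr hx₂, hv₂⟩, fun h => hA₂ h.1⟩
    exact Finset.card_le_one.mp (le_of_eq hcd) _ hm₁ _ hm₂
  -- define the coloring
  refine ⟨fun x => if hx : x ∈ H.edgeSet then
      (if (⟨x, hx⟩ : H.edgeSet) ∈ S then Fin.castSucc (m ⟨x, hx⟩) else 2) else 2,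
    ?_⟩
  intro x₁ hx₁ x₂ hx₂ hne ⟨v, hv₁, hv₂⟩ heq
  simp only [dif_pos hx₁, dif_pos hx₂] at heq
  by_cases hS₁ : (⟨x₁, hx₁⟩ : H.edgeSet) ∈ S <;>
    by_cases hS₂ : (⟨x₂, hx₂⟩ : H.edgeSet) ∈ S
  · simp only [if_pos hS₁, if_pos hS₂] at heq
    have := hinj _ hS₁ _ hS₂ v hv₁ hv₂ (Fin.castSucc_inj.mp heq)
    exact hne (congrArg Subtype.val this)
  · simp only [if_pos hS₁, if_neg hS₂] at heq
    have := (m ⟨x₁, hx₁⟩).isLt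
    have h2 := congrArg Fin.val heq
    rw [Fin.coe_castSucc, show ((2 : Fin 3) : ℕ) = 2 from rfl] at h2
    omega
  · simp only [if_neg hS₁, if_pos hS₂] at heq
    have := (m ⟨x₂, hx₂⟩).isLt
    have h2 := congrArg Fin.val heq
    rw [Fin.coe_castSucc, show ((2 : Fin 3) : ℕ) = 2 from rfl] at h2
    omega
  · have hA₁ : x₁ ∉ A := fun h => hS₁ ((hmemA x₁).mp h).2
    have hA₂ : x₂ ∉ A := fun h => hS₂ ((hmemA x₂).mp h).2
    exact hne (huniq v x₁ x₂ hx₁ hx₂ hv₁ hv₂ hA₁ hA₂)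

lemma fwd {W : Type*} [Fintype W] [DecidableEq W] (H : SimpleGraph W) [DecidableRel H.Adj]
    (hcubic : ∀ v : W, H.degree v = 3)
    (φ : Sym2 W → Fin 3)
    (hφ : ∀ e₁ ∈ H.edgeSet, ∀ e₂ ∈ H.edgeSet, e₁ ≠ e₂ →
        (∃ v : W, v ∈ e₁ ∧ v ∈ e₂) → φ e₁ ≠ φ e₂) :
    (∃ (S : Finset H.edgeSet)
        (P : H.edgeSet → Σ u v : W ⊕ Fin 2, (completeBipartiteGraph W (Fin 2)).Walk u v),
      S.card = Fintype.card W ∧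
      (∀ e ∈ S, (P e).2.2.IsPath) ∧
      (∀ e ∈ S, ∃ s t : W, (e : Sym2 W) = s(s, t) ∧
        (P e).1 = Sum.inl s ∧ (P e).2.1 = Sum.inl t) ∧
      (∀ e₁ ∈ S, ∀ e₂ ∈ S, e₁ ≠ e₂ → ∀ x ∈ (P e₁).2.2.edges, x ∉ (P e₂).2.2.edges)) := by
  classical
  have hout : ∀ x : Sym2 W, s(x.out.1, x.out.2) = x := fun x => by exact x.out_eq
  have hne : ∀ e : H.edgeSet, e.val.out.1 ≠ e.val.out.2 := by
    intro e
    have he := e.prop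
    rw [← hout e.val, SimpleGraph.mem_edgeSet] at he
    exact he.ne
  -- the index used for an edge
  set idx : Sym2 W → Fin 2 := fun x => if φ x = 0 then 0 else 1 with hidx
  refine ⟨Finset.univ.filter (fun e => φ e.val ≠ 2),
    fun e => ⟨inl e.val.out.1, inl e.val.out.2,
      SimpleGraph.Walk.cons
        (show (completeBipartiteGraph W (Fin 2)).Adj (inl e.val.out.1) (inr (idx e.val)) by simp)
        (SimpleGraph.Walk.cons
          (show (completeBipartiteGraph W (Fin 2)).Adj (inr (idx e.val)) (inl e.val.out.2) by simp)
          SimpleGraph.Walk.nil)⟩,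
    ?_, ?_, ?_, ?_⟩
  · -- cardinality
    set S : Finset H.edgeSet := Finset.univ.filter (fun e => φ e.val ≠ 2) with hS
    have hAS : S.image Subtype.val = {x ∈ H.edgeFinset | φ x ≠ 2} := by
      ext x
      simp only [hS, Finset.mem_image, Finset.mem_filter, Finset.mem_univ, true_and,
        SimpleGraph.mem_edgeFinset]
      constructor
      · rintro ⟨e, h1, rfl⟩; exact ⟨e.prop, h1⟩
      · rintro ⟨h1, h2⟩; exact ⟨⟨x, h1⟩, h2, rfl⟩
    set A : Finset (Sym2 W) := {x ∈ H.edgeFinset | φ x ≠ 2} with hA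
    have hcard : S.card = A.card := by
      rw [← hAS]; exact (Finset.card_image_of_injective _ Subtype.val_injective).symm
    have hdiag : ∀ e ∈ A, ¬ e.IsDiag := by
      intro e he
      rw [hA, Finset.mem_filter, SimpleGraph.mem_edgeFinset] at he
      exact SimpleGraph.not_isDiag_of_mem_edgeSet _ he.1
    have hper : ∀ v : W, ({e ∈ A | v ∈ e}).card = 2 := by
      intro v
      set I := {e ∈ H.edgeFinset | v ∈ e} with hI
      have hI3 : I.card = 3 := by rw [hI, incid_card]; exact hcubic v
      have hinj : Set.InjOn φ I := by
        intro e1 h1 e2 h2 heq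
        by_contra hne12
        rw [hI] at h1 h2
        simp only [Finset.coe_filter, Set.mem_setOf_eq, SimpleGraph.mem_edgeFinset] at h1 h2
        exact hφ e1 h1.1 e2 h2.1 hne12 ⟨v, h1.2, h2.2⟩ heq
      have himg : I.image φ = Finset.univ := by
        apply Finset.eq_univ_of_card
        rw [Finset.card_image_of_injOn hinj, hI3]; simp
      have h2mem : (2 : Fin 3) ∈ I.image φ := by rw [himg]; exact Finset.mem_univ _
      obtain ⟨e₂, he₂I, he₂⟩ := Finset.mem_image.mp h2mem
      have hsingle : {e ∈ I | φ e = 2} = {e₂} := by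
        apply Finset.eq_singleton_iff_unique_mem.mpr
        refine ⟨Finset.mem_filter.mpr ⟨he₂I, he₂⟩, ?_⟩
        intro x hx
        rw [Finset.mem_filter] at hx
        exact hinj hx.1 he₂I (hx.2.trans he₂.symm)
      have hsplit := Finset.card_filter_add_card_filter_not
        (s := I) (p := fun e => φ e = 2)
      have : {e ∈ A | v ∈ e} = {e ∈ I | ¬ φ e = 2} := by
        ext x
        rw [hA, hI]
        simp only [Finset.mem_filter]
        tauto
      rw [this]
      have h1 : ({e ∈ I | φ e = 2}).card = 1 := by rw [hsingle]; simp
      omega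
    have hdc := doublecount A hdiag
    rw [Finset.sum_congr rfl (fun v _ => hper v), Finset.sum_const, smul_eq_mul] at hdc
    rw [Finset.card_univ] at hdc
    rw [hcard]
    omega
  · -- paths
    intro e he
    simp only [SimpleGraph.Walk.cons_isPath_iff, SimpleGraph.Walk.isPath_iff_eq_nil,
      SimpleGraph.Walk.support_cons, SimpleGraph.Walk.support_nil, List.mem_cons]
    have := hne e
    simp_all
  · -- endpoints
    intro e he
    exact ⟨e.val.out.1, e.val.out.2, (hout e.val).symm, rfl, rfl⟩
  · -- disjointness
    intro e₁ h₁ e₂ h₂ hne12 x hx1 hx2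
    simp only [Finset.mem_filter, Finset.mem_univ, true_and] at h₁ h₂
    simp only [SimpleGraph.Walk.edges_cons, SimpleGraph.Walk.edges_nil, List.mem_cons,
      List.not_mem_nil, or_false] at hx1 hx2
    have hval : e₁.val ≠ e₂.val := fun h => hne12 (Subtype.ext h)
    -- derive: idx equal and shared vertex
    have key : ∃ v : W, v ∈ e₁.val ∧ v ∈ e₂.val ∧
        (idx e₁.val : Fin 2) = idx e₂.val := by
      obtain h|h := hx1 <;> obtain h'|h' := hx2 <;> rw [h, Sym2.eq_iff] at h' <;>
        simp only [Sum.inl.injEq, Sum.inr.injEq, reduceCtorEq, and_false, false_and,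
          and_true, true_and, or_false, false_or] at h'
      · exact ⟨e₁.val.out.1, Sym2.out_fst_mem _, h'.1 ▸ Sym2.out_fst_mem _, h'.2⟩
      · exact ⟨e₁.val.out.1, Sym2.out_fst_mem _, h'.1 ▸ Sym2.out_snd_mem _, h'.2⟩
      · exact ⟨e₁.val.out.2, Sym2.out_snd_mem _, h'.2 ▸ Sym2.out_fst_mem _, h'.1⟩
      · exact ⟨e₁.val.out.2, Sym2.out_snd_mem _, h'.2 ▸ Sym2.out_snd_mem _, h'.1⟩
    obtain ⟨v, hv1, hv2, hii⟩ := key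
    have hφne := hφ e₁.val e₁.prop e₂.val e₂.prop hval ⟨v, hv1, hv2⟩
    rw [hidx] at hii
    simp only at hii
    revert hii hφne h₁ h₂
    generalize φ e₁.val = a; generalize φ e₂.val = b
    fin_cases a <;> fin_cases b <;> simp


/-- A cubic graph `H` on `n` vertices admits a proper 3-edge-coloring if
and only if, in the complete bipartite graph with parts `{v1,v2}` and `V(H)`, there is
a family of `n` pairwise edge-disjoint paths, each connecting the endpoints of a
distinct edge of `H`. -/
theorem edge_coloring_iff_routing_K2n
    {W : Type*} [Fintype W] [DecidableEq W] (H : SimpleGraph W) [DecidableRel H.Adj]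
    (hcubic : ∀ v : W, H.degree v = 3) :
    (∃ φ : Sym2 W → Fin 3, ∀ e₁ ∈ H.edgeSet, ∀ e₂ ∈ H.edgeSet, e₁ ≠ e₂ →
        (∃ v : W, v ∈ e₁ ∧ v ∈ e₂) → φ e₁ ≠ φ e₂) ↔
    (∃ (S : Finset H.edgeSet)
        (P : H.edgeSet → Σ u v : W ⊕ Fin 2, (completeBipartiteGraph W (Fin 2)).Walk u v),
      S.card = Fintype.card W ∧
      (∀ e ∈ S, (P e).2.2.IsPath) ∧
      (∀ e ∈ S, ∃ s t : W, (e : Sym2 W) = s(s, t) ∧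
        (P e).1 = Sum.inl s ∧ (P e).2.1 = Sum.inl t) ∧
      (∀ e₁ ∈ S, ∀ e₂ ∈ S, e₁ ≠ e₂ → ∀ x ∈ (P e₁).2.2.edges, x ∉ (P e₂).2.2.edges)) := by
  constructor
  · rintro ⟨φ, hφ⟩
    exact fwd H hcubic φ hφ
  · rintro ⟨S, P, h1, h2, h3, h4⟩
    exact bwd H hcubic S P h1 h2 h3 h4
end
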